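/- arXiv:1409.3483 — 18 statements merged into one kernel-verified Lean document; each statement's English description precedes it below -/
import Mathlib

section
/- Let M be a type and E an equivalence relation on Set M. Then the following are equivalent: (1) A[E] is naturally relatively categorical over M, i.e. for all ∂₁, ∂₂ : Set M → M realizing A[E] and every X ⊆ Set.range ∂₁, E(X, ∂₂ '' (∂₁ ⁻¹' X)) holds; (2) A[E] is injection invariant on abstracts over M, i.e. for every ∂ : Set M → M realizing A[E], every injective ι : M → M, and every X ⊆ Set.range ∂, E(X, ι '' X) holds; (3) A[E] is cardinality coarsening on abstracts over M, i.e. for every ∂ : Set M → M realizing A[E] and all X, Y : Set M with X ≈ Y and X ⊆ Set.range ∂, E(X, Y) holds. -/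
/-- `∂` realizes the abstraction principle `A[E]`. -/
def Realizes {M : Type*} (E : Set M → Set M → Prop) (d : Set M → M) : Prop :=
  ∀ X Y : Set M, d X = d Y ↔ E X Y

open Cardinal in
/-- If `X` and `Y` are equinumerous and `Xᶜ` injects into `Yᶜ`, there is an injection of the
whole type mapping `X` onto `Y`. -/
lemma exists_injOn_image {M : Type*} (X Y : Set M) (h1 : Cardinal.mk X = Cardinal.mk Y)
    (h2 : Cardinal.mk ↥Xᶜ ≤ Cardinal.mk ↥Yᶜ) :
    ∃ ι : M → M, Function.Injective ι ∧ ι '' X = Y := by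
  classical
  obtain ⟨e⟩ := Cardinal.eq.mp h1
  obtain ⟨f⟩ := h2
  refine ⟨fun m => if h : m ∈ X then (e ⟨m, h⟩ : M) else (f ⟨m, h⟩ : M), ?_, ?_⟩
  · intro a b hab
    dsimp only at hab
    by_cases ha : a ∈ X <;> by_cases hb : b ∈ X
    · rw [dif_pos ha, dif_pos hb] at hab
      simpa using congrArg Subtype.val (e.injective (Subtype.ext hab))
    · rw [dif_pos ha, dif_neg hb] at hab
      exact absurd (hab ▸ (e ⟨a, ha⟩).2) (f ⟨b, hb⟩).2
    · rw [dif_neg ha, dif_pos hb] at hab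
      exact absurd (hab ▸ (e ⟨b, hb⟩).2) (f ⟨a, ha⟩).2
    · rw [dif_neg ha, dif_neg hb] at hab
      simpa using congrArg Subtype.val (f.injective (Subtype.ext hab))
  · ext y
    constructor
    · rintro ⟨x, hx, rfl⟩
      dsimp only
      rw [dif_pos hx]; exact (e ⟨x, hx⟩).2
    · intro hy
      refine ⟨(e.symm ⟨y, hy⟩ : M), (e.symm ⟨y, hy⟩).2, ?_⟩
      dsimp only
      rw [dif_pos (e.symm ⟨y, hy⟩).2]
      simp
open Cardinal in
/-- Cardinal arithmetic: if `X ≈ Y` but `#Yᶜ < #Xᶜ`, then `#X = #M`. -/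
lemma mk_eq_mk_univ {M : Type*} (X Y : Set M) (hXY : Cardinal.mk X = Cardinal.mk Y)
    (h : Cardinal.mk ↥Yᶜ < Cardinal.mk ↥Xᶜ) : Cardinal.mk X = Cardinal.mk M := by
  have hX : mk X + mk ↥Xᶜ = mk M := Cardinal.mk_sum_compl X
  have hY : mk Y + mk ↥Yᶜ = mk M := Cardinal.mk_sum_compl Y
  have hsum : mk X + mk ↥Xᶜ = mk X + mk ↥Yᶜ := by rw [hX, hXY, hY]
  have hle : mk ↥Xᶜ ≤ mk X := by
    by_contra hlt
    push_neg at hlt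
    rcases lt_or_ge (mk ↥Xᶜ) ℵ₀ with hfin | hinf
    · have hXfin : mk X < ℵ₀ := hlt.trans hfin
      have := Cardinal.eq_of_add_eq_add_left hsum hXfin
      exact absurd this.symm (ne_of_lt h)
    · have : mk X + mk ↥Yᶜ < mk ↥Xᶜ := Cardinal.add_lt_of_lt hinf hlt h
      rw [← hsum] at this
      exact absurd this (not_lt.mpr le_add_self)
  rcases lt_or_ge (mk X) ℵ₀ with hfin | hinf
  · have := Cardinal.eq_of_add_eq_add_left hsum hfin
    exact absurd this.symm (ne_of_lt h)
  · rw [← hX, Cardinal.add_eq_left hinf hle]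

/-- Theorem 1.1/3.1: natural relative categoricity ↔ injection invariance on abstracts
↔ cardinality coarsening on abstracts. -/
theorem naturallyRelativelyCategorical_tfae {M : Type*} (E : Set M → Set M → Prop)
    (hE : Equivalence E) :
    List.TFAE
      [ -- (1) naturally relatively categorical
        (∀ d₁ d₂ : Set M → M, Realizes E d₁ → Realizes E d₂ →
          ∀ X : Set M, X ⊆ Set.range d₁ → E X (d₂ '' (d₁ ⁻¹' X))),
        -- (2) injection invariant on abstracts
        (∀ d : Set M → M, Realizes E d →
          ∀ ι : M → M, Function.Injective ι →
            ∀ X : Set M, X ⊆ Set.range d → E X (ι '' X)),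
        -- (3) cardinality coarsening on abstracts
        (∀ d : Set M → M, Realizes E d →
          ∀ X Y : Set M, Cardinal.mk X = Cardinal.mk Y → X ⊆ Set.range d → E X Y) ] := by
  classical
  tfae_have 1 → 2
  | h1, d, hd, ι, hι, X, hX => by
    have hd2 : Realizes E (ι ∘ d) := by
      intro A B
      rw [Function.comp_apply, Function.comp_apply, hι.eq_iff]
      exact hd A B
    have := h1 d (ι ∘ d) hd hd2 X hX
    have himg : (ι ∘ d) '' (d ⁻¹' X) = ι '' X := by
      rw [Set.image_comp, Set.image_preimage_eq_inter_range,
        Set.inter_eq_self_of_subset_left hX]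
    rwa [himg] at this
  tfae_have 2 → 3
  | h2, d, hd, X, Y, hXY, hX => by
    rcases le_or_gt (Cardinal.mk ↥Xᶜ) (Cardinal.mk ↥Yᶜ) with hc | hc
    · obtain ⟨ι, hι, him⟩ := exists_injOn_image X Y hXY hc
      have := h2 d hd ι hι X hX
      rwa [him] at this
    · -- `#X = #M`, so we can build a surjective realizer `d'` and go from `Y` to `X`.
      have hfull : Cardinal.mk X = Cardinal.mk M := mk_eq_mk_univ X Y hXY hc
      have hrange : Cardinal.mk ↥(Set.range d) = Cardinal.mk M :=
        le_antisymm (Cardinal.mk_set_le _)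
          (hfull ▸ Cardinal.mk_le_mk_of_subset hX)
      obtain ⟨e⟩ := Cardinal.eq.mp hrange
      set f : M → M := fun m => if h : m ∈ Set.range d then e ⟨m, h⟩ else m with hf
      have hd' : Realizes E (f ∘ d) := by
        intro A B
        constructor
        · intro hAB
          simp only [Function.comp_apply, hf, dif_pos (Set.mem_range_self A),
            dif_pos (Set.mem_range_self B)] at hAB
          exact (hd A B).mp (congrArg Subtype.val (e.injective hAB))
        · intro hAB
          have : d A = d B := (hd A B).mpr hAB
          simp [this]
      have hY : Y ⊆ Set.range (f ∘ d) := by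
        intro y _
        obtain ⟨A, hA⟩ := (e.symm y).2
        refine ⟨A, ?_⟩
        have h1 : d A ∈ Set.range d := Set.mem_range_self A
        simp only [Function.comp_apply, hf, dif_pos h1]
        have h2 : (⟨d A, h1⟩ : Set.range d) = e.symm y := Subtype.ext hA
        rw [h2, e.apply_symm_apply]
      obtain ⟨ι, hι, him⟩ := exists_injOn_image Y X hXY.symm hc.le
      have := h2 (f ∘ d) hd' ι hι Y hY
      rw [him] at this
      exact hE.symm this
  tfae_have 3 → 1
  | h3, d₁, d₂, hd₁, hd₂, X, hX => by
    -- choose, for each abstract `m ∈ range d₁`, a set `S m` with `d₁ (S m) = m`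
    set S : M → Set M := fun m => if h : m ∈ Set.range d₁ then h.choose else ∅ with hS
    have hSd : ∀ m ∈ Set.range d₁, d₁ (S m) = m := by
      intro m hm
      simp only [hS, dif_pos hm]
      exact hm.choose_spec
    have hbij : Cardinal.mk X = Cardinal.mk ↥(d₂ '' (d₁ ⁻¹' X)) := by
      refine Cardinal.mk_congr (Equiv.ofBijective
        (fun x => ⟨d₂ (S x), ?_⟩) ⟨?_, ?_⟩)
      · exact ⟨S x, by simp [hSd x (hX x.2), x.2], rfl⟩
      · intro a b hab
        have h1 : E (S a) (S b) := (hd₂ _ _).mp (congrArg Subtype.val hab)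
        have h2 : d₁ (S a) = d₁ (S b) := (hd₁ _ _).mpr h1
        rw [hSd a (hX a.2), hSd b (hX b.2)] at h2
        exact Subtype.ext h2
      · rintro ⟨y, Z, hZ, rfl⟩
        refine ⟨⟨d₁ Z, hZ⟩, ?_⟩
        have : d₁ (S (d₁ Z)) = d₁ Z := hSd _ (hX hZ)
        have hEZ : E (S (d₁ Z)) Z := (hd₁ _ _).mp this
        exact Subtype.ext ((hd₂ _ _).mpr hEZ)
    exact h3 d₁ hd₁ X _ hbij hX
  tfae_finish
end

section
/- Let M be a type and E an equivalence relation on Set M. Then the following are equivalent: (1) A[E] is surjectively relatively categorical over M, i.e. for all surjective ∂₁, ∂₂ : Set M → M realizing A[E] and every X : Set M, E(X, ∂₂ '' (∂₁ ⁻¹' X)) holds; (2) if there exists a surjective ∂ : Set M → M realizing A[E], then E is permutation invariant: for every bijection π : M ≃ M and every X : Set M, E(X, π '' X) holds; (3) if there exists a surjective ∂ : Set M → M realizing A[E], then E is bicardinality coarsening: for all X, Y : Set M with Cardinal.mk X = Cardinal.mk Y and Cardinal.mk ↥(Xᶜ) = Cardinal.mk ↥(Yᶜ), E(X, Y) holds.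 -/
/-- Theorem 1.2/3.3: surjective relative categoricity ↔ permutation invariance
↔ bicardinality coarsening (under surjectivity of the abstraction operator). -/
theorem surjectivelyRelativelyCategorical_tfae {M : Type*} (E : Set M → Set M → Prop)
    (hE : Equivalence E) :
    List.TFAE
      [ -- (1) surjectively relatively categorical
        (∀ d₁ d₂ : Set M → M, Function.Surjective d₁ → Function.Surjective d₂ →
          Realizes E d₁ → Realizes E d₂ →
          ∀ X : Set M, E X (d₂ '' (d₁ ⁻¹' X))),
        -- (2) permutation invariant, assuming a surjective realization exists
        ((∃ d : Set M → M, Function.Surjective d ∧ Realizes E d) →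
          ∀ π : M ≃ M, ∀ X : Set M, E X (⇑π '' X)),
        -- (3) bicardinality coarsening, assuming a surjective realization exists
        ((∃ d : Set M → M, Function.Surjective d ∧ Realizes E d) →
          ∀ X Y : Set M, Cardinal.mk X = Cardinal.mk Y →
            Cardinal.mk ↥(Xᶜ) = Cardinal.mk ↥(Yᶜ) → E X Y) ] := by
  tfae_have 1 → 2 := by
    rintro h1 ⟨d, hds, hdr⟩ π X
    have h2s : Function.Surjective (⇑π ∘ d) := π.surjective.comp hds
    have h2r : Realizes E (⇑π ∘ d) := by
      intro A B
      simp only [Function.comp_apply, EmbeddingLike.apply_eq_iff_eq]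
      exact hdr A B
    have h := h1 d (⇑π ∘ d) hds h2s hdr h2r X
    rwa [Set.image_comp, Set.image_preimage_eq X hds] at h
  tfae_have 2 → 3 := by
    intro h2 hex X Y hXY hXc
    classical
    obtain ⟨e⟩ := Cardinal.eq.mp hXY
    obtain ⟨f⟩ := Cardinal.eq.mp hXc
    let π : M ≃ M := (Equiv.Set.sumCompl X).symm.trans ((e.sumCongr f).trans
      (Equiv.Set.sumCompl Y))
    have hmem : ∀ x : X, π ↑x = ↑(e x) := by
      intro x
      simp [π, Equiv.Set.sumCompl_symm_apply]
    have himg : ⇑π '' X = Y := by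
      ext y
      constructor
      · rintro ⟨x, hx, rfl⟩
        rw [hmem ⟨x, hx⟩]
        exact (e ⟨x, hx⟩).2
      · intro hy
        refine ⟨↑(e.symm ⟨y, hy⟩), (e.symm ⟨y, hy⟩).2, ?_⟩
        rw [hmem (e.symm ⟨y, hy⟩)]
        simp
    have h := h2 hex π X
    rwa [himg] at h
  tfae_have 3 → 1 := by
    intro h3 d₁ d₂ h₁s h₂s h₁r h₂r X
    classical
    set φ : M → M := fun m => d₂ (Classical.choose (h₁s m)) with hφ
    set ψ : M → M := fun m => d₁ (Classical.choose (h₂s m)) with hψ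
    have key : ∀ Z, φ (d₁ Z) = d₂ Z := fun Z =>
      (h₂r _ _).mpr ((h₁r _ _).mp (Classical.choose_spec (h₁s (d₁ Z))))
    have key' : ∀ Z, ψ (d₂ Z) = d₁ Z := fun Z =>
      (h₁r _ _).mpr ((h₂r _ _).mp (Classical.choose_spec (h₂s (d₂ Z))))
    have left : Function.LeftInverse ψ φ := by
      intro m
      obtain ⟨Z, rfl⟩ := h₁s m
      rw [key, key']
    have right : Function.RightInverse ψ φ := by
      intro m
      obtain ⟨Z, rfl⟩ := h₂s m
      rw [key', key]
    let Φ : M ≃ M := ⟨φ, ψ, left, right⟩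
    have himg : φ '' X = d₂ '' (d₁ ⁻¹' X) := by
      ext y
      constructor
      · rintro ⟨m, hm, rfl⟩
        obtain ⟨Z, rfl⟩ := h₁s m
        exact ⟨Z, hm, (key Z).symm⟩
      · rintro ⟨Z, hZ, rfl⟩
        exact ⟨d₁ Z, hZ, key Z⟩
    have hΦ : ⇑Φ = φ := rfl
    apply h3 ⟨d₁, h₁s, h₁r⟩
    · rw [← himg, ← hΦ]
      exact (Cardinal.mk_image_eq Φ.injective).symm
    · rw [← himg, ← hΦ, ← Set.image_compl_eq Φ.bijective]
      exact (Cardinal.mk_image_eq Φ.injective).symm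
  tfae_finish
end

section
/- (Fine's categoricity theorem) Let M be a type and E an equivalence relation on Set M which is cardinality coarsening, i.e. E X Y holds whenever Cardinal.mk X = Cardinal.mk Y. Suppose ∂₁, ∂₂ : Set M → M both realize A[E] and Cardinal.mk ↥((Set.range ∂₁)ᶜ) = Cardinal.mk ↥((Set.range ∂₂)ᶜ). Then there exists a bijection Δ : M ≃ M such that Δ (∂₁ X) = ∂₂ (Δ '' X) for every X : Set M (i.e. the two expanded structures are isomorphic). -/
/-- Fine's categoricity theorem: if `E` is cardinality coarsening and the complements of the
ranges of two abstraction operators realizing `A[E]` are equinumerous, then the two expanded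
structures are isomorphic. -/
theorem fine_categoricity {M : Type*} (E : Set M → Set M → Prop) (hE : Equivalence E)
    (hcc : ∀ X Y : Set M, Cardinal.mk X = Cardinal.mk Y → E X Y)
    (d₁ d₂ : Set M → M) (h1 : Realizes E d₁) (h2 : Realizes E d₂)
    (hcompl : Cardinal.mk ↥((Set.range d₁)ᶜ) = Cardinal.mk ↥((Set.range d₂)ᶜ)) :
    ∃ Δ : M ≃ M, ∀ X : Set M, Δ (d₁ X) = d₂ (⇑Δ '' X) := by
  classical
  obtain ⟨ec⟩ := Cardinal.eq.mp hcompl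
  let F : ↥(Set.range d₁) → ↥(Set.range d₂) := fun m =>
    ⟨d₂ m.2.choose, Set.mem_range_self _⟩
  let G : ↥(Set.range d₂) → ↥(Set.range d₁) := fun m =>
    ⟨d₁ m.2.choose, Set.mem_range_self _⟩
  have hF : ∀ (X : Set M) (h : d₁ X ∈ Set.range d₁), (F ⟨d₁ X, h⟩ : M) = d₂ X := by
    intro X h
    have hc : d₁ h.choose = d₁ X := h.choose_spec
    exact (h2 _ _).mpr ((h1 _ _).mp hc)
  have hG : ∀ (X : Set M) (h : d₂ X ∈ Set.range d₂), (G ⟨d₂ X, h⟩ : M) = d₁ X := by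
    intro X h
    have hc : d₂ h.choose = d₂ X := h.choose_spec
    exact (h1 _ _).mpr ((h2 _ _).mp hc)
  have hGF : Function.LeftInverse G F := by
    rintro ⟨m, hm⟩
    obtain ⟨X, rfl⟩ := hm
    have : F ⟨d₁ X, Set.mem_range_self X⟩ = ⟨d₂ X, Set.mem_range_self X⟩ :=
      Subtype.ext (hF X _)
    rw [this]
    exact Subtype.ext (hG X _)
  have hFG : Function.RightInverse G F := by
    rintro ⟨m, hm⟩
    obtain ⟨X, rfl⟩ := hm
    have : G ⟨d₂ X, Set.mem_range_self X⟩ = ⟨d₁ X, Set.mem_range_self X⟩ :=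
      Subtype.ext (hG X _)
    rw [this]
    exact Subtype.ext (hF X _)
  let e : ↥(Set.range d₁) ≃ ↥(Set.range d₂) := ⟨F, G, hGF, hFG⟩
  let Δ : M ≃ M :=
    (Equiv.Set.sumCompl (Set.range d₁)).symm.trans
      ((e.sumCongr ec).trans (Equiv.Set.sumCompl (Set.range d₂)))
  refine ⟨Δ, fun X => ?_⟩
  have h1' : Δ (d₁ X) = d₂ X := by
    show (Equiv.Set.sumCompl (Set.range d₂)) ((e.sumCongr ec)
      ((Equiv.Set.sumCompl (Set.range d₁)).symm (d₁ X))) = d₂ X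
    rw [Equiv.Set.sumCompl_symm_apply_of_mem (Set.mem_range_self X)]
    simp only [Equiv.sumCongr_apply, Sum.map_inl, Equiv.Set.sumCompl_apply_inl]
    exact hF X _
  rw [h1']
  have hcard : Cardinal.mk ↥(⇑Δ '' X) = Cardinal.mk ↥X :=
    Cardinal.mk_image_eq Δ.injective
  exact (h2 _ _).mpr (hE.symm (hcc _ _ hcard))
end

section
/- (Coarsening Dichotomy) Let M be an infinite type and E an equivalence relation on Set M that is cardinality coarsening on small concepts. Let sE be the setoid on Set M given by E and s≈ the setoid on Set M given by equinumerosity (X ≈ Y iff Cardinal.mk X = Cardinal.mk Y). Then either Cardinal.mk (Quotient sE) < Cardinal.mk M, or Cardinal.mk (Quotient sE) = Cardinal.mk (Quotient s≈) = Cardinal.mk M; in either case Cardinal.mk (Quotient sE) ≤ Cardinal.mk M. -/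
universe u

/-- The setoid on `Set M` associated to an equivalence relation `E`. -/
def setoidOfEquiv {M : Type u} (E : Set M → Set M → Prop) (hE : Equivalence E) :
    Setoid (Set M) := ⟨E, hE⟩

/-- The setoid on `Set M` given by equinumerosity. -/
def equinumSetoid (M : Type u) : Setoid (Set M) :=
  ⟨fun X Y => Cardinal.mk X = Cardinal.mk Y,
    ⟨fun _ => rfl, fun h => h.symm, fun h h' => h.trans h'⟩⟩

lemma mk_equinum_quot_le (M : Type u) [Infinite M] :
    Cardinal.mk (Quotient (equinumSetoid M)) ≤ Cardinal.mk M := by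
  have hmem : ∀ X : Set M, (Cardinal.mk X).ord ∈ Set.Iio ((Cardinal.mk M).ord + 1) := by
    intro X
    simp only [Set.mem_Iio, Ordinal.add_one_eq_succ, Order.lt_succ_iff]
    exact Cardinal.ord_le_ord.mpr (Cardinal.mk_set_le X)
  have g : Quotient (equinumSetoid M) ↪ Set.Iio ((Cardinal.mk M).ord + 1) := by
    refine ⟨Quotient.lift (fun X => ⟨(Cardinal.mk X).ord, hmem X⟩) ?_, ?_⟩
    · intro X Y h; exact Subtype.ext (congrArg Cardinal.ord h)
    · rintro ⟨X⟩ ⟨Y⟩ h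
      exact Quotient.sound (Cardinal.ord_injective (congrArg Subtype.val h))
  have h1 : Cardinal.lift.{u+1} (Cardinal.mk (Quotient (equinumSetoid M)))
      ≤ Cardinal.lift.{u} (Cardinal.mk (Set.Iio ((Cardinal.mk M).ord + 1))) :=
    Cardinal.lift_mk_le'.mpr ⟨g⟩
  rw [Ordinal.mk_Iio_ordinal, Ordinal.add_one_eq_succ, Ordinal.card_succ,
    Cardinal.card_ord, Cardinal.add_one_eq (Cardinal.aleph0_le_mk M)] at h1
  simpa using h1

/-- Coarsening Dichotomy: if `E` is cardinality coarsening on small concepts on an infinite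
domain, then the number of `E`-classes is either `< |M|` or equal to the number of
equinumerosity classes and to `|M|`; in either case it is `≤ |M|`. -/
theorem coarsening_dichotomy {M : Type u} [Infinite M] (E : Set M → Set M → Prop)
    (hE : Equivalence E)
    (hsmall : ∀ X Y : Set M, Cardinal.mk X = Cardinal.mk Y →
      Cardinal.mk X ≤ Cardinal.mk (Quotient (setoidOfEquiv E hE)) → E X Y) :
    ((Cardinal.mk (Quotient (setoidOfEquiv E hE)) < Cardinal.mk M) ∨
      (Cardinal.mk (Quotient (setoidOfEquiv E hE)) = Cardinal.mk (Quotient (equinumSetoid M)) ∧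
        Cardinal.mk (Quotient (setoidOfEquiv E hE)) = Cardinal.mk M)) ∧
    Cardinal.mk (Quotient (setoidOfEquiv E hE)) ≤ Cardinal.mk M := by
  by_cases h : Cardinal.mk (Quotient (setoidOfEquiv E hE)) < Cardinal.mk M
  · exact ⟨Or.inl h, le_of_lt h⟩
  · have hMle : Cardinal.mk M ≤ Cardinal.mk (Quotient (setoidOfEquiv E hE)) := le_of_not_gt h
    have hall : ∀ X Y : Set M, Cardinal.mk X = Cardinal.mk Y → E X Y := fun X Y hxy =>
      hsmall X Y hxy (le_trans (Cardinal.mk_set_le X) hMle)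
    -- surjection from the equinumerosity quotient onto the E-quotient
    have f : Quotient (equinumSetoid M) → Quotient (setoidOfEquiv E hE) :=
      Quotient.lift (fun X => Quotient.mk (setoidOfEquiv E hE) X)
        (fun X Y hxy => Quotient.sound (hall X Y hxy))
    have hfsurj : Function.Surjective
        (Quotient.lift (fun X => Quotient.mk (setoidOfEquiv E hE) X)
          (fun X Y hxy => Quotient.sound (hall X Y hxy)) :
          Quotient (equinumSetoid M) → Quotient (setoidOfEquiv E hE)) := by
      rintro ⟨X⟩
      exact ⟨Quotient.mk (equinumSetoid M) X, rfl⟩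
    have h1 : Cardinal.mk (Quotient (setoidOfEquiv E hE)) ≤
        Cardinal.mk (Quotient (equinumSetoid M)) :=
      Cardinal.mk_le_of_surjective hfsurj
    have h2 := mk_equinum_quot_le M
    have heq1 : Cardinal.mk (Quotient (setoidOfEquiv E hE)) = Cardinal.mk M :=
      le_antisymm (le_trans h1 h2) hMle
    have heq2 : Cardinal.mk (Quotient (setoidOfEquiv E hE)) =
        Cardinal.mk (Quotient (equinumSetoid M)) :=
      le_antisymm h1 (le_trans h2 hMle)
    exact ⟨Or.inr ⟨heq2, heq1⟩, le_of_eq heq1⟩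
end

section
/- Let M be an infinite type and E an equivalence relation on Set M that is cardinality coarsening on small concepts. Then there exists a function ∂ : Set M → M realizing A[E]; that is, A[E] has a standard model on every infinite domain. -/
universe u

open Cardinal Ordinal Set

/-- The set of cardinals below an infinite cardinal `c` has cardinality at most `c`. -/
lemma mk_Iic_cardinal_le {c : Cardinal.{u}} (hc : ℵ₀ ≤ c) :
    #(Set.Iic c) ≤ Cardinal.lift.{u + 1} c := by
  set o : Ordinal.{u} := preAleph.symm c with ho
  have hinj : Function.Injective (fun x : Set.Iic c => (⟨preAleph.symm x.1,
      by
        have : preAleph.symm x.1 ≤ o := preAleph.symm.monotone x.2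
        exact lt_of_le_of_lt this (Order.lt_succ o)⟩ : Set.Iio (Order.succ o))) := by
    intro a b hab
    have := congrArg Subtype.val hab
    simp only at this
    exact Subtype.ext (preAleph.symm.injective this)
  have h1 : #(Set.Iic c) ≤ #(Set.Iio (Order.succ o)) := Cardinal.mk_le_of_injective hinj
  have h2 : #(Set.Iio (Order.succ o)) = Cardinal.lift.{u + 1} (Order.succ o).card :=
    Ordinal.mk_Iio_ordinal _
  have h3 : (Order.succ o).card = o.card + 1 := Ordinal.card_succ o
  have h4 : o.card ≤ c := by
    calc o.card ≤ (preOmega o).card := Ordinal.card_le_card (Ordinal.le_preOmega_self o)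
    _ = preAleph o := Ordinal.card_preOmega o
    _ = c := by rw [ho, preAleph.apply_symm_apply]
  have h5 : o.card + 1 ≤ c := by
    calc o.card + 1 ≤ c + 1 := add_le_add h4 le_rfl
    _ = c := Cardinal.add_one_eq hc
  calc #(Set.Iic c) ≤ Cardinal.lift.{u + 1} (Order.succ o).card := h1.trans_eq h2
    _ = Cardinal.lift.{u + 1} (o.card + 1) := by rw [h3]
    _ ≤ Cardinal.lift.{u + 1} c := Cardinal.lift_le.2 h5

/-- If `E` is cardinality coarsening on small concepts, then `A[E]` has a standard model
on every infinite domain. -/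
theorem exists_realization_of_ccSmall {M : Type u} [Infinite M] (E : Set M → Set M → Prop)
    (hE : Equivalence E)
    (hsmall : ∀ X Y : Set M, Cardinal.mk X = Cardinal.mk Y →
      Cardinal.mk X ≤ Cardinal.mk (Quotient (setoidOfEquiv E hE)) → E X Y) :
    ∃ d : Set M → M, ∀ X Y : Set M, d X = d Y ↔ E X Y := by
  set s := setoidOfEquiv E hE with hs
  set Q := Quotient s with hQ
  -- Key claim: #Q ≤ #M
  have key : #Q ≤ #M := by
    by_contra h
    push_neg at h
    -- Then every subset of M is "small", so E is determined by cardinality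
    have hsmall' : ∀ X Y : Set M, #X = #Y → E X Y := fun X Y hXY =>
      hsmall X Y hXY ((Cardinal.mk_set_le X).trans h.le)
    -- The map q ↦ #(q.out) is injective from Q into Iic #M
    have hinj : Function.Injective (fun q : Q => (⟨#(q.out : Set M), Cardinal.mk_set_le _⟩ :
        Set.Iic (#M))) := by
      intro q q' hqq'
      have hcard : #(q.out : Set M) = #(q'.out : Set M) := congrArg Subtype.val hqq'
      have : E q.out q'.out := hsmall' _ _ hcard
      calc q = ⟦q.out⟧ := (Quotient.out_eq q).symm
        _ = ⟦q'.out⟧ := Quotient.sound this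
        _ = q' := Quotient.out_eq q'
    have h1 := Cardinal.lift_mk_le'.2 ⟨⟨_, hinj⟩⟩
    have h2 := Cardinal.lift_le.2 (mk_Iic_cardinal_le (Cardinal.aleph0_le_mk M))
    have h3 := h1.trans h2
    rw [Cardinal.lift_lift, Cardinal.lift_le] at h3
    exact absurd h3 (not_le.2 h)
  -- Get an injection from Q into M
  obtain ⟨f⟩ := key
  refine ⟨fun X => f ⟦X⟧, fun X Y => ?_⟩
  constructor
  · intro hd
    have : (⟦X⟧ : Q) = ⟦Y⟧ := f.injective hd
    exact Quotient.exact this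
  · intro hE'
    exact congrArg f (Quotient.sound hE')
end

section
/- Let M be an infinite type and E an equivalence relation on Set M that is bicardinality coarsening, with associated setoid sE. Then there exists a surjective function ∂ : Set M → M realizing A[E] if and only if Cardinal.mk (Quotient sE) = Cardinal.mk M and the set of cardinals strictly less than Cardinal.mk M has cardinality Cardinal.lift (Cardinal.mk M) (i.e. Cardinal.mk ↥{λ : Cardinal | λ < Cardinal.mk M} = Cardinal.lift (Cardinal.mk M), lifting universes as needed). -/
universe u

open Cardinal

lemma aux_mk_lt_le (κ : Cardinal.{u}) :
    Cardinal.mk ↥{l : Cardinal.{u} | l < κ} ≤ Cardinal.lift.{u+1} κ := by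
  have h : Cardinal.mk ↥{l : Cardinal.{u} | l < κ} ≤ Cardinal.mk ↥(Set.Iio κ.ord) := by
    refine Cardinal.mk_le_of_injective (f := fun l => ⟨l.1.ord, Cardinal.ord_lt_ord.2 l.2⟩) ?_
    intro a b hab
    exact Subtype.ext (Cardinal.ord_injective (congrArg Subtype.val hab))
  simpa [Ordinal.mk_Iio_ordinal, Cardinal.card_ord] using h

/-- For `E` bicardinality coarsening on an infinite domain, there is a surjective abstraction
operator realizing `A[E]` iff the number of `E`-classes is `|M|` and there are exactly `|M|`
cardinals below `|M|`. -/
theorem exists_surjective_realization_iff {M : Type u} [Infinite M]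
    (E : Set M → Set M → Prop) (hE : Equivalence E)
    (hbc : ∀ X Y : Set M, Cardinal.mk X = Cardinal.mk Y →
      Cardinal.mk ↥(Xᶜ) = Cardinal.mk ↥(Yᶜ) → E X Y) :
    (∃ d : Set M → M, Function.Surjective d ∧ ∀ X Y : Set M, d X = d Y ↔ E X Y) ↔
      (Cardinal.mk (Quotient (setoidOfEquiv E hE)) = Cardinal.mk M ∧
        Cardinal.mk ↥{l : Cardinal.{u} | l < Cardinal.mk M} =
          Cardinal.lift.{u+1} (Cardinal.mk M)) := by
  set κ := Cardinal.mk M with hκ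
  have hκinf : ℵ₀ ≤ κ := Cardinal.infinite_iff.1 inferInstance
  constructor
  · rintro ⟨d, hsurj, hd⟩
    -- the quotient is in bijection with M
    have h1 : Cardinal.mk (Quotient (setoidOfEquiv E hE)) = κ := by
      have hbij : Function.Bijective
          (Quotient.lift d (fun X Y h => (hd X Y).2 h) :
            Quotient (setoidOfEquiv E hE) → M) := by
        constructor
        · intro a b
          induction a using Quotient.ind
          induction b using Quotient.ind
          intro h
          exact Quotient.sound ((hd _ _).1 h)
        · intro m
          obtain ⟨X, hX⟩ := hsurj m
          exact ⟨Quotient.mk _ X, hX⟩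
      exact Cardinal.mk_congr (Equiv.ofBijective _ hbij)
    refine ⟨h1, le_antisymm (aux_mk_lt_le κ) ?_⟩
    -- now the hard inequality
    set S := {l : Cardinal.{u} | l < κ} with hS
    have hSinf : ℵ₀ ≤ Cardinal.mk ↥S := by
      refine Cardinal.aleph0_le_mk_iff.2 ?_
      refine Infinite.of_injective (fun n : ℕ => (⟨(n : Cardinal.{u}), ?_⟩ : ↥S)) ?_
      · exact (Cardinal.nat_lt_aleph0 n).trans_le hκinf
      · intro a b hab
        exact Nat.cast_injective (congrArg Subtype.val hab)
    set t : Set M → Cardinal.{u} × Cardinal.{u} := fun X => (Cardinal.mk X, Cardinal.mk ↥(Xᶜ))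
      with ht
    set T := Set.range t with hT
    -- sum of components is κ
    have hsum : ∀ p : ↥T, p.1.1 + p.1.2 = κ := by
      rintro ⟨p, X, rfl⟩
      exact Cardinal.mk_sum_compl X
    -- surjection T → ULift Quotient
    have hle1 : Cardinal.lift.{u+1} κ ≤ Cardinal.mk ↥T := by
      rw [← h1, ← Cardinal.mk_uLift]
      refine Cardinal.mk_le_of_surjective
        (f := fun p : ↥T => ULift.up (Quotient.mk _ p.2.choose)) ?_
      rintro ⟨q⟩
      induction q using Quotient.ind with
      | _ X =>
        refine ⟨⟨t X, X, rfl⟩, ?_⟩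
        have hc : t (⟨t X, X, rfl⟩ : ↥T).2.choose = t X := (⟨t X, X, rfl⟩ : ↥T).2.choose_spec
        have hE1 : E (⟨t X, X, rfl⟩ : ↥T).2.choose X :=
          hbc _ _ (congrArg Prod.fst hc) (congrArg Prod.snd hc)
        exact congrArg ULift.up (Quotient.sound hE1)
    -- injection T → Option S ⊕ Option S
    have hle2 : Cardinal.mk ↥T ≤ Cardinal.mk (Option ↥S ⊕ Option ↥S) := by
      refine Cardinal.mk_le_of_injective (f := fun p : ↥T =>
        if h : p.1.1 < κ then Sum.inr (some ⟨p.1.1, h⟩)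
        else if h2 : p.1.2 < κ then Sum.inl (some ⟨p.1.2, h2⟩)
        else Sum.inl none) ?_
      have key : ∀ p : ↥T, ¬ p.1.1 < κ → p.1.1 = κ := by
        intro p h
        have h1 : p.1.1 ≤ κ := le_of_add_le_left (le_of_eq (hsum p))
        exact le_antisymm h1 (not_lt.1 h)
      have key2 : ∀ p : ↥T, ¬ p.1.2 < κ → p.1.2 = κ := by
        intro p h
        have h1 : p.1.2 ≤ κ := le_of_add_le_right (le_of_eq (hsum p))
        exact le_antisymm h1 (not_lt.1 h)
      have keyb : ∀ p : ↥T, p.1.1 < κ → p.1.2 = κ := by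
        intro p h
        by_contra hcon
        have hb : p.1.2 < κ :=
          lt_of_le_of_ne (le_of_add_le_right (le_of_eq (hsum p))) hcon
        exact absurd (hsum p) (ne_of_lt (Cardinal.add_lt_of_lt hκinf h hb))
      intro a b hab
      by_cases ha : a.1.1 < κ <;> by_cases hb : b.1.1 < κ <;>
        simp only [ha, hb, dif_pos, dif_neg, not_false_iff] at hab
      · -- both inr
        have h1 : a.1.1 = b.1.1 := by
          have := Sum.inr.inj hab
          exact congrArg Subtype.val (Option.some.inj this)
        have h2 : a.1.2 = b.1.2 := by rw [keyb a ha, keyb b hb]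
        exact Subtype.ext (Prod.ext h1 h2)
      · by_cases hb2 : b.1.2 < κ <;> simp [hb2] at hab
      · by_cases ha2 : a.1.2 < κ <;> simp [ha2] at hab
      · have h1 : a.1.1 = b.1.1 := by rw [key a ha, key b hb]
        have h2 : a.1.2 = b.1.2 := by
          by_cases ha2 : a.1.2 < κ <;> by_cases hb2 : b.1.2 < κ <;>
            simp only [ha2, hb2, dif_pos, dif_neg, not_false_iff] at hab
          · exact congrArg Subtype.val (Option.some.inj (Sum.inl.inj hab))
          · exact absurd hab (by simp)
          · exact absurd hab (by simp)
          · rw [key2 a ha2, key2 b hb2]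
        exact Subtype.ext (Prod.ext h1 h2)
    have hcalc : Cardinal.mk (Option ↥S ⊕ Option ↥S) = Cardinal.mk ↥S := by
      simp [Cardinal.mk_sum, Cardinal.mk_option, Cardinal.add_one_eq hSinf,
        Cardinal.add_eq_self hSinf]
    calc Cardinal.lift.{u+1} κ ≤ Cardinal.mk ↥T := hle1
      _ ≤ Cardinal.mk (Option ↥S ⊕ Option ↥S) := hle2
      _ = Cardinal.mk ↥S := hcalc
  · rintro ⟨h1, -⟩
    obtain ⟨e⟩ := Cardinal.eq.1 h1
    refine ⟨fun X => e (Quotient.mk _ X), ?_, ?_⟩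
    · intro m
      refine ⟨(e.symm m).out, ?_⟩
      simp [Quotient.out_eq]
    · intro X Y
      rw [e.apply_eq_iff_eq]
      exact ⟨fun h => Quotient.exact h, fun h => Quotient.sound h⟩
end

section
/- Let M be a type with Cardinal.mk M = Cardinal.aleph 1, and let E be an equivalence relation on Set M that is cardinality coarsening, i.e. E X Y holds whenever Cardinal.mk X = Cardinal.mk Y. Then for any ∂₁, ∂₂ : Set M → M realizing A[E] there exists a bijection Δ : M ≃ M such that Δ (∂₁ X) = ∂₂ (Δ '' X) for every X : Set M; hence any two standard models of A[E] of cardinality ℵ₁ are isomorphic, so A[E] is ω₁-bivalent. -/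
universe u

/-- On a domain of cardinality `ℵ₁`, any two standard models of `A[E]` for a cardinality
coarsening `E` are isomorphic; hence `A[E]` is `ω₁`-bivalent. -/
theorem omega1_bivalent_of_cardinalityCoarsening {M : Type u}
    (hM : Cardinal.mk M = Cardinal.aleph 1)
    (E : Set M → Set M → Prop) (hE : Equivalence E)
    (hcc : ∀ X Y : Set M, Cardinal.mk X = Cardinal.mk Y → E X Y)
    (d₁ d₂ : Set M → M) (h1 : Realizes E d₁) (h2 : Realizes E d₂) :
    ∃ Δ : M ≃ M, ∀ X : Set M, Δ (d₁ X) = d₂ (⇑Δ '' X) := by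
  classical
  have haleph1 : Cardinal.aleph 1 = Order.succ Cardinal.aleph0 := by
    rw [show (1 : Ordinal) = Order.succ 0 by simp, Cardinal.aleph_succ, Cardinal.aleph_zero]
  have hinf : Infinite M := by
    rw [Cardinal.infinite_iff, hM]; exact Cardinal.aleph0_le_aleph 1
  -- any realizer has range of cardinality less than #M
  have hcount : ∀ d : Set M → M, Realizes E d →
      Cardinal.mk (Set.range d) < Cardinal.mk M := by
    intro d hd
    have hg : ∀ m : Set.range d, ∃ X : Set M, d X = (m : M) := fun m => m.2
    choose f hf using hg
    let g : Set.range d → ℕ ⊕ Bool := fun m =>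
      if h : Cardinal.mk (f m) < Cardinal.aleph0 then Sum.inl (Cardinal.toNat (Cardinal.mk (f m)))
      else Sum.inr (decide (Cardinal.mk (f m) ≤ Cardinal.aleph0))
    have hEq : ∀ a b : Set.range d,
        Cardinal.mk (f a) = Cardinal.mk (f b) → a = b := by
      intro a b h
      have h' : d (f a) = d (f b) := (hd _ _).mpr (hcc _ _ h)
      rw [hf a, hf b] at h'
      exact Subtype.ext h'
    have hle : ∀ a : Set.range d, Cardinal.mk (f a) ≤ Cardinal.aleph 1 := by
      intro a
      calc Cardinal.mk (f a) ≤ Cardinal.mk M := Cardinal.mk_subtype_le _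
        _ = Cardinal.aleph 1 := hM
    have hginj : Function.Injective g := by
      intro a b hab
      apply hEq
      by_cases ha : Cardinal.mk (f a) < Cardinal.aleph0 <;>
        by_cases hb : Cardinal.mk (f b) < Cardinal.aleph0 <;>
          simp only [g, ha, hb, dif_pos, dif_neg, not_false_iff] at hab
      · -- both finite
        have hnat := Sum.inl.inj hab
        calc Cardinal.mk (f a)
            = ((Cardinal.toNat (Cardinal.mk (f a)) : ℕ) : Cardinal) :=
              (Cardinal.cast_toNat_of_lt_aleph0 ha).symm
          _ = ((Cardinal.toNat (Cardinal.mk (f b)) : ℕ) : Cardinal) := by rw [hnat]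
          _ = Cardinal.mk (f b) := Cardinal.cast_toNat_of_lt_aleph0 hb
      · exact absurd hab (by simp)
      · exact absurd hab (by simp)
      · -- both infinite, hence each is ℵ₀ or ℵ₁
        have hab' : (Cardinal.mk (f a) ≤ Cardinal.aleph0) ↔ (Cardinal.mk (f b) ≤ Cardinal.aleph0) := by
          have := Sum.inr.inj hab
          constructor <;> intro h
          · have : decide (Cardinal.mk (f b) ≤ Cardinal.aleph0) = true := by
              rw [← this]; simpa using h
            simpa using this
          · have : decide (Cardinal.mk (f a) ≤ Cardinal.aleph0) = true := by
              rw [this]; simpa using h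
            simpa using this
        have ha' : Cardinal.aleph0 ≤ Cardinal.mk (f a) := le_of_not_gt ha
        have hb' : Cardinal.aleph0 ≤ Cardinal.mk (f b) := le_of_not_gt hb
        by_cases hA : Cardinal.mk (f a) ≤ Cardinal.aleph0
        · have hB := hab'.mp hA
          rw [le_antisymm hA ha', le_antisymm hB hb']
        · have hB : ¬ Cardinal.mk (f b) ≤ Cardinal.aleph0 := fun h => hA (hab'.mpr h)
          have hA1 : Cardinal.aleph 1 ≤ Cardinal.mk (f a) := by
            rw [haleph1, Order.succ_le_iff]; exact lt_of_not_ge hA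
          have hB1 : Cardinal.aleph 1 ≤ Cardinal.mk (f b) := by
            rw [haleph1, Order.succ_le_iff]; exact lt_of_not_ge hB
          rw [le_antisymm (hle a) hA1, le_antisymm (hle b) hB1]
    have hginj' : Function.Injective (fun m => ULift.up.{u} (g m)) :=
      fun a b h => hginj (congrArg ULift.down h)
    calc Cardinal.mk (Set.range d) ≤ Cardinal.mk (ULift.{u} (ℕ ⊕ Bool)) :=
          Cardinal.mk_le_of_injective hginj'
      _ ≤ Cardinal.aleph0 := Cardinal.mk_le_aleph0
      _ < Cardinal.aleph 1 := Cardinal.aleph0_lt_aleph_one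
      _ = Cardinal.mk M := hM.symm
  -- the bijection between the ranges
  have hg1 : ∀ m : Set.range d₁, ∃ X : Set M, d₁ X = (m : M) := fun m => m.2
  have hg2 : ∀ m : Set.range d₂, ∃ X : Set M, d₂ X = (m : M) := fun m => m.2
  choose f₁ hf₁ using hg1
  choose f₂ hf₂ using hg2
  have key : ∀ X Y : Set M, d₁ X = d₁ Y ↔ d₂ X = d₂ Y :=
    fun X Y => (h1 X Y).trans (h2 X Y).symm
  let e : Set.range d₁ ≃ Set.range d₂ :=
    { toFun := fun m => ⟨d₂ (f₁ m), Set.mem_range_self _⟩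
      invFun := fun m => ⟨d₁ (f₂ m), Set.mem_range_self _⟩
      left_inv := by
        intro m
        apply Subtype.ext
        show d₁ (f₂ ⟨d₂ (f₁ m), _⟩) = (m : M)
        have h := hf₂ ⟨d₂ (f₁ m), Set.mem_range_self _⟩
        rw [← hf₁ m]
        exact (key _ _).mpr h
      right_inv := by
        intro m
        apply Subtype.ext
        show d₂ (f₁ ⟨d₁ (f₂ m), _⟩) = (m : M)
        have h := hf₁ ⟨d₁ (f₂ m), Set.mem_range_self _⟩
        rw [← hf₂ m]
        exact (key _ _).mp h }
  -- bijection between the complements of the ranges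
  have hc1 : Cardinal.mk ((Set.range d₁)ᶜ : Set M) = Cardinal.mk M :=
    Cardinal.mk_compl_of_infinite _ (hcount d₁ h1)
  have hc2 : Cardinal.mk ((Set.range d₂)ᶜ : Set M) = Cardinal.mk M :=
    Cardinal.mk_compl_of_infinite _ (hcount d₂ h2)
  obtain ⟨c⟩ := Cardinal.eq.mp (hc1.trans hc2.symm)
  -- the full bijection
  let Δ : M ≃ M :=
    (Equiv.Set.sumCompl (Set.range d₁)).symm.trans
      ((Equiv.sumCongr e c).trans (Equiv.Set.sumCompl (Set.range d₂)))
  have hΔ : ∀ X : Set M, Δ (d₁ X) = d₂ X := by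
    intro X
    have hmem : d₁ X ∈ Set.range d₁ := Set.mem_range_self _
    show (Equiv.Set.sumCompl (Set.range d₂))
        ((Equiv.sumCongr e c) ((Equiv.Set.sumCompl (Set.range d₁)).symm (d₁ X))) = d₂ X
    rw [Equiv.Set.sumCompl_symm_apply_of_mem hmem]
    simp only [Equiv.sumCongr_apply, Sum.map_inl, Equiv.Set.sumCompl_apply_inl]
    -- e ⟨d₁ X, hmem⟩ = ⟨d₂ X, _⟩
    show d₂ (f₁ ⟨d₁ X, hmem⟩) = d₂ X
    exact (key _ _).mp (hf₁ ⟨d₁ X, hmem⟩)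
  refine ⟨Δ, fun X => ?_⟩
  rw [hΔ X]
  apply (h2 _ _).mpr
  apply hcc
  exact (Cardinal.mk_image_eq Δ.injective).symm
end

section
/- (The Nuisance Principle implies the universe is finite) Let M be a type. If there exists a function ∂ : Set M → M such that for all X Y : Set M, ∂ X = ∂ Y ↔ (X ∆ Y).Finite (where ∆ is symmetric difference), then M is finite. -/
/-- The Nuisance Principle implies the universe is finite: if there is an abstraction
operator realizing `A[E]` for `E X Y ↔ (X ∆ Y).Finite`, then `M` is finite. -/
theorem nuisance_implies_finite {M : Type*}
    (h : ∃ d : Set M → M, ∀ X Y : Set M, d X = d Y ↔ (symmDiff X Y).Finite) :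
    Finite M := by
  obtain ⟨d, hd⟩ := h
  by_contra hfin
  rw [not_finite_iff_infinite] at hfin
  -- get an equivalence M × M ≃ M
  have hcard : (Cardinal.mk (M × M)) = Cardinal.mk M := by
    simp [Cardinal.mk_prod, Cardinal.mul_eq_self (Cardinal.aleph0_le_mk M)]
  obtain ⟨e⟩ := Cardinal.eq.mp hcard
  -- injective map Set M → M, contradicting Cantor
  have hinj : Function.Injective (fun X : Set M => d (e '' (X ×ˢ (Set.univ : Set M)))) := by
    intro X Y hXY
    simp only at hXY
    rw [hd] at hXY
    by_contra hne
    have hsd : (symmDiff X Y).Nonempty := by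
      rw [Set.nonempty_iff_ne_empty]
      intro he
      exact hne (symmDiff_eq_bot.mp (by simpa using he))
    obtain ⟨a, ha⟩ := hsd
    -- symmDiff of images
    have himg : symmDiff (e '' (X ×ˢ Set.univ)) (e '' (Y ×ˢ Set.univ))
        = e '' (symmDiff (X ×ˢ Set.univ) (Y ×ˢ Set.univ)) := by
      exact (Set.image_symmDiff e.injective _ _).symm
    rw [himg] at hXY
    have hpre : (symmDiff (X ×ˢ Set.univ) (Y ×ˢ Set.univ)).Finite :=
      (Set.finite_image_iff (e.injective.injOn)).mp hXY
    -- the set {a} ×ˢ univ is inside the symmDiff and infinite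
    have hsub : ({a} ×ˢ (Set.univ : Set M)) ⊆ symmDiff (X ×ˢ Set.univ) (Y ×ˢ Set.univ) := by
      rintro ⟨x, y⟩ hxy
      obtain ⟨hx, -⟩ := hxy
      simp only [Set.mem_singleton_iff] at hx
      subst hx
      rw [Set.mem_symmDiff] at ha ⊢
      rcases ha with ⟨h1, h2⟩ | ⟨h1, h2⟩
      · exact Or.inl ⟨⟨h1, trivial⟩, fun hc => h2 hc.1⟩
      · exact Or.inr ⟨⟨h1, trivial⟩, fun hc => h2 hc.1⟩
    have : ({a} ×ˢ (Set.univ : Set M)).Finite := hpre.subset hsub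
    have hinf : ({a} ×ˢ (Set.univ : Set M)).Infinite := by
      exact Set.infinite_univ.prod_right ⟨a, rfl⟩
    exact hinf this
  exact Function.cantor_injective _ hinj
end

section
/- (The Nuisance Principle is naturally relatively categorical) Let M be a type and E the relation on Set M given by E(X,Y) := (X ∆ Y).Finite. Then for all ∂₁, ∂₂ : Set M → M realizing A[E] and every X ⊆ Set.range ∂₁, the symmetric difference X ∆ (∂₂ '' (∂₁ ⁻¹' X)) is finite; i.e. E(X, Γ '' X) holds where Γ is the natural bijection. -/
private theorem nuisance_finite {M : Type*} (d₁ : Set M → M)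
    (h1 : ∀ X Y : Set M, d₁ X = d₁ Y ↔ (symmDiff X Y).Finite) : Finite M := by
  by_contra h
  rw [not_finite_iff_infinite] at h
  obtain ⟨e⟩ : Nonempty (M × ℕ ≃ M) := by
    rw [← Cardinal.lift_mk_eq', Cardinal.mk_prod, Cardinal.mk_nat, Cardinal.lift_aleph0]
    simp only [Cardinal.lift_id, Cardinal.lift_id']
    exact Cardinal.mul_aleph0_eq (Cardinal.aleph0_le_mk M)
  set g : Set M → M := fun S => d₁ (e '' (S ×ˢ (Set.univ : Set ℕ))) with hg
  refine Function.cantor_injective g ?_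
  intro S T hST
  by_contra hne
  have hfin : (symmDiff (e '' (S ×ˢ (Set.univ : Set ℕ))) (e '' (T ×ˢ (Set.univ : Set ℕ)))).Finite :=
    (h1 _ _).mp hST
  rw [← Set.image_symmDiff e.injective] at hfin
  have hfin2 : (symmDiff (S ×ˢ (Set.univ : Set ℕ)) (T ×ˢ (Set.univ : Set ℕ))).Finite :=
    Set.Finite.of_finite_image hfin (e.injective.injOn)
  obtain ⟨x, hx⟩ : (symmDiff S T).Nonempty := by
    rw [Set.nonempty_iff_ne_empty]
    intro hE
    exact hne (symmDiff_eq_bot.mp hE)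
  have hsub : ({x} ×ˢ (Set.univ : Set ℕ)) ⊆ symmDiff (S ×ˢ Set.univ) (T ×ˢ Set.univ) := by
    rintro ⟨a, n⟩ ⟨ha, -⟩
    simp only [Set.mem_singleton_iff] at ha
    subst ha
    rcases hx with ⟨hxS, hxT⟩ | ⟨hxT, hxS⟩
    · exact Or.inl ⟨⟨hxS, trivial⟩, fun h' => hxT h'.1⟩
    · exact Or.inr ⟨⟨hxT, trivial⟩, fun h' => hxS h'.1⟩
  have : ({x} ×ˢ (Set.univ : Set ℕ)).Finite := hfin2.subset hsub
  have : ({x} ×ˢ (Set.univ : Set ℕ)).Infinite := by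
    exact Set.Infinite.prod_right Set.infinite_univ ⟨x, rfl⟩
  exact this ‹_›

/-- The Nuisance Principle is naturally relatively categorical: for any two abstraction
operators realizing it and any `X` contained in the range of the first, `X` differs from the
image of `X` under the natural bijection by a finite set. -/
theorem nuisance_naturallyRelativelyCategorical {M : Type*} (d₁ d₂ : Set M → M)
    (h1 : ∀ X Y : Set M, d₁ X = d₁ Y ↔ (symmDiff X Y).Finite)
    (h2 : ∀ X Y : Set M, d₂ X = d₂ Y ↔ (symmDiff X Y).Finite)
    (X : Set M) (hX : X ⊆ Set.range d₁) :
    (symmDiff X (d₂ '' (d₁ ⁻¹' X))).Finite := by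
  have : Finite M := nuisance_finite d₁ h1
  exact Set.toFinite _
end

section
/- (Boolos' New V is not relatively elementarily equivalent) Let E be the relation on Set ℕ given by E(X,Y) := (X.Finite ∨ Y.Finite) → X = Y (on a countably infinite domain, 'X is smaller than the universe' means X is finite). Then there exist surjective functions ∂₁, ∂₂ : Set ℕ → ℕ, both realizing A[E], such that there exists a finite set X : Set ℕ with ∂₁ X ∈ X, while for every finite set X : Set ℕ one has ∂₂ X ∉ X. Consequently New V is not naturally relatively categorical. -/
/-- New V on a countable domain: `E X Y` iff (X or Y is finite → X = Y). -/
def NewV (X Y : Set ℕ) : Prop := (X.Finite ∨ Y.Finite) → X = Y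

open scoped Classical

/-- The base realization: a finite set goes to the successor of its binary code,
infinite sets go to `0`. -/
noncomputable def newVD (X : Set ℕ) : ℕ :=
  if h : X.Finite then (∑ i ∈ h.toFinset, 2 ^ i) + 1 else 0

lemma newVD_surjective : Function.Surjective newVD := by
  intro n
  cases n with
  | zero =>
      refine ⟨Set.univ, ?_⟩
      rw [newVD, dif_neg Set.infinite_univ]
  | succ n =>
      refine ⟨(n.bitIndices.toFinset : Finset ℕ), ?_⟩
      have h : ((n.bitIndices.toFinset : Finset ℕ) : Set ℕ).Finite := (Finset.finite_toSet _)
      rw [newVD, dif_pos h]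
      have : h.toFinset = n.bitIndices.toFinset := by ext; simp
      rw [this, Finset.twoPowSum_toFinset_bitIndices]

lemma newVD_realizes (X Y : Set ℕ) : newVD X = newVD Y ↔ NewV X Y := by
  unfold newVD NewV
  by_cases hX : X.Finite <;> by_cases hY : Y.Finite
  · rw [dif_pos hX, dif_pos hY]
    constructor
    · intro h _
      have := Finset.geomSum_injective (le_refl 2) (Nat.succ_injective h)
      rwa [Set.Finite.toFinset_inj] at this
    · intro h
      obtain rfl := h (Or.inl hX)
      rfl
  · rw [dif_pos hX, dif_neg hY]
    constructor
    · intro h; exact absurd h (Nat.succ_ne_zero _)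
    · intro h
      exact absurd (h (Or.inl hX) ▸ hX) hY
  · rw [dif_neg hX, dif_pos hY]
    constructor
    · intro h; exact absurd h.symm (Nat.succ_ne_zero _)
    · intro h
      exact absurd (h (Or.inr hY) ▸ hY) hX
  · rw [dif_neg hX, dif_neg hY]
    simp [hX, hY]

lemma newVD_not_mem (X : Set ℕ) (hX : X.Finite) : newVD X ∉ X := by
  intro hmem
  have h1 : 2 ^ newVD X ≤ ∑ i ∈ hX.toFinset, 2 ^ i :=
    Finset.single_le_sum (f := fun i => 2 ^ i) (fun i _ => Nat.zero_le _)
      (hX.mem_toFinset.2 hmem)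
  have h2 : newVD X = (∑ i ∈ hX.toFinset, 2 ^ i) + 1 := by rw [newVD, dif_pos hX]
  have h3 : newVD X < 2 ^ newVD X := Nat.lt_two_pow_self
  omega

/-- Boolos' New V is not relatively elementarily equivalent: there are two surjective
realizations of New V which disagree about whether some finite set contains its own
abstract. Consequently New V is not naturally relatively categorical. -/
theorem newV_not_relativelyElementarilyEquivalent :
    ∃ d₁ d₂ : Set ℕ → ℕ,
      Function.Surjective d₁ ∧ Function.Surjective d₂ ∧
      (∀ X Y : Set ℕ, d₁ X = d₁ Y ↔ NewV X Y) ∧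
      (∀ X Y : Set ℕ, d₂ X = d₂ Y ↔ NewV X Y) ∧
      (∃ X : Set ℕ, X.Finite ∧ d₁ X ∈ X) ∧
      (∀ X : Set ℕ, X.Finite → d₂ X ∉ X) := by
  refine ⟨(Equiv.swap 1 3) ∘ newVD, newVD,
    (Equiv.swap 1 3).surjective.comp newVD_surjective, newVD_surjective, ?_, newVD_realizes,
    ?_, newVD_not_mem⟩
  · intro X Y
    rw [Function.comp_apply, Function.comp_apply, (Equiv.swap 1 3).injective.eq_iff]
    exact newVD_realizes X Y
  · refine ⟨{1}, Set.finite_singleton 1, ?_⟩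
    have h : newVD {1} = 3 := by
      have hf : ({1} : Set ℕ).Finite := Set.finite_singleton 1
      rw [newVD, dif_pos hf]
      have : hf.toFinset = {1} := by ext; simp
      rw [this]; simp
    simp [h]
end

section
/- (The Bicardinality Principle is not relatively elementarily equivalent) Let E be the relation on Set ℕ given by E(X,Y) := Cardinal.mk X = Cardinal.mk Y ∧ Cardinal.mk ↥(Xᶜ) = Cardinal.mk ↥(Yᶜ). Then: (a) there exists a surjective ∂₁ : Set ℕ → ℕ realizing A[E]; and (b) for every surjective ∂₁ realizing A[E], the map ∂₂ : Set ℕ → ℕ defined by ∂₂ X = 2 * (∂₁ X) also realizes A[E], and, writing A := Set.range ∂₂ and a := ∂₂ A, one has ∂₂ (A \ {a}) = a, whereas writing b := ∂₁ Set.univ one has ∂₁ (Set.univ \ {b}) ≠ b. Consequently the Bicardinality Principle is not naturally relatively categorical. -/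
/-- The bicardinality relation on `Set ℕ`. -/
def Ebc (X Y : Set ℕ) : Prop :=
  Cardinal.mk X = Cardinal.mk Y ∧ Cardinal.mk ↥(Xᶜ) = Cardinal.mk ↥(Yᶜ)

lemma cardEq (X Y : Set ℕ) :
    Cardinal.mk X = Cardinal.mk Y ↔
      ((X.Finite ∧ Y.Finite ∧ X.ncard = Y.ncard) ∨ (X.Infinite ∧ Y.Infinite)) := by
  constructor
  · intro h
    by_cases hX : X.Finite
    · have hY : Y.Finite := by
        rw [← Set.finite_coe_iff, ← Cardinal.mk_lt_aleph0_iff] at hX ⊢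
        rwa [← h]
      refine Or.inl ⟨hX, hY, ?_⟩
      rw [← Nat.card_coe_set_eq, ← Nat.card_coe_set_eq]
      exact congrArg Cardinal.toNat h
    · have hY : ¬ Y.Finite := by
        rw [← Set.finite_coe_iff, ← Cardinal.mk_lt_aleph0_iff] at hX ⊢
        rwa [← h]
      exact Or.inr ⟨hX, hY⟩
  · rintro (⟨hX, hY, hc⟩ | ⟨hX, hY⟩)
    · have h1 : Cardinal.mk X < Cardinal.aleph0 := by
        rw [Cardinal.mk_lt_aleph0_iff]; exact Set.finite_coe_iff.mpr hX
      have h2 : Cardinal.mk Y < Cardinal.aleph0 := by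
        rw [Cardinal.mk_lt_aleph0_iff]; exact Set.finite_coe_iff.mpr hY
      rw [← Cardinal.cast_toNat_of_lt_aleph0 h1, ← Cardinal.cast_toNat_of_lt_aleph0 h2]
      have : Nat.card X = Nat.card Y := by
        rw [Nat.card_coe_set_eq, Nat.card_coe_set_eq]; exact hc
      exact_mod_cast congrArg Nat.cast this
    · haveI := Set.infinite_coe_iff.mpr hX
      haveI := Set.infinite_coe_iff.mpr hY
      rw [Cardinal.mk_eq_aleph0, Cardinal.mk_eq_aleph0]

open Classical in
noncomputable def d1fun (X : Set ℕ) : ℕ :=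
  if X.Finite then 2 * X.ncard + 1 else if Xᶜ.Finite then 2 * Xᶜ.ncard + 2 else 0

lemma not_both_finite {X : Set ℕ} (h1 : X.Finite) (h2 : Xᶜ.Finite) : False :=
  Set.infinite_univ (α := ℕ) (Set.union_compl_self X ▸ h1.union h2)

lemma d1_realizes : ∀ X Y : Set ℕ, d1fun X = d1fun Y ↔ Ebc X Y := by
  classical
  intro X Y
  unfold d1fun Ebc
  rw [cardEq X Y, cardEq Xᶜ Yᶜ]
  by_cases hX : X.Finite <;> by_cases hY : Y.Finite <;>
    by_cases hXc : Xᶜ.Finite <;> by_cases hYc : Yᶜ.Finite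
  all_goals {
    first
      | exact absurd (not_both_finite ‹X.Finite› ‹Xᶜ.Finite›) not_false
      | exact absurd (not_both_finite ‹Y.Finite› ‹Yᶜ.Finite›) not_false
      | (have fX : X.Infinite ∨ ¬ X.Infinite :=
           em _
         clear fX
         first
           | have iX : X.Infinite := ‹¬ X.Finite›
           | have iX : ¬ X.Infinite := ‹X.Finite›.not_infinite
         first
           | have iY : Y.Infinite := ‹¬ Y.Finite›
           | have iY : ¬ Y.Infinite := ‹Y.Finite›.not_infinite
         first
           | have iXc : Xᶜ.Infinite := ‹¬ Xᶜ.Finite›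
           | have iXc : ¬ Xᶜ.Infinite := ‹Xᶜ.Finite›.not_infinite
         first
           | have iYc : Yᶜ.Infinite := ‹¬ Yᶜ.Finite›
           | have iYc : ¬ Yᶜ.Infinite := ‹Yᶜ.Finite›.not_infinite
         simp only [hX, hY, hXc, hYc, iX, iY, iXc, iYc, if_true, if_false, if_pos, if_neg,
           not_false_iff, iff_true, iff_false, true_and, and_true, false_and, and_false,
           or_false, false_or, true_or, or_true, not_true, not_false_eq_true]
         try first | rfl | omega | simp | tauto)
  }

lemma evens_infinite : ({m | Even m} : Set ℕ).Infinite :=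
  Set.infinite_of_injective_forall_mem (f := fun k : ℕ => 2 * k)
    (fun a b h => by dsimp only at h; omega) (fun a => by simp [parity_simps])

lemma odds_infinite : (({m | Even m} : Set ℕ)ᶜ).Infinite :=
  Set.infinite_of_injective_forall_mem (f := fun k : ℕ => 2 * k + 1)
    (fun a b h => by dsimp only at h; omega) (fun a => by simp [Set.mem_compl_iff, parity_simps])

lemma ncard_Iio (n : ℕ) : (Set.Iio n : Set ℕ).ncard = n := by
  rw [← Finset.coe_range, Set.ncard_coe_finset, Finset.card_range]

lemma d1_surj : Function.Surjective d1fun := by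
  classical
  intro n
  rcases Nat.even_or_odd n with ⟨k, hk⟩ | ⟨k, hk⟩
  · rcases Nat.eq_zero_or_pos k with rfl | hk0
    · refine ⟨{m | Even m}, ?_⟩
      have h1 : ¬ ({m | Even m} : Set ℕ).Finite := evens_infinite
      have h2 : ¬ (({m | Even m} : Set ℕ)ᶜ).Finite := odds_infinite
      simp only [d1fun, if_neg h1, if_neg h2]
      omega
    · refine ⟨(Set.Iio (k - 1))ᶜ, ?_⟩
      have hfin : (Set.Iio (k - 1) : Set ℕ).Finite := Set.finite_Iio _
      have h1 : ¬ ((Set.Iio (k - 1) : Set ℕ)ᶜ).Finite := hfin.infinite_compl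
      rw [d1fun, if_neg h1, compl_compl, if_pos hfin, ncard_Iio]
      omega
  · refine ⟨Set.Iio k, ?_⟩
    rw [d1fun, if_pos (Set.finite_Iio _), ncard_Iio]
    omega

/-- The Bicardinality Principle is not relatively elementarily equivalent: it has a
surjective realization `∂₁`, and for any such, `∂₂ X := 2 * ∂₁ X` also realizes it; writing
`A := Set.range ∂₂` and `a := ∂₂ A`, one has `∂₂ (A \ {a}) = a`, whereas with
`b := ∂₁ Set.univ` one has `∂₁ (Set.univ \ {b}) ≠ b`. Hence the Bicardinality Principle is
not naturally relatively categorical. -/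
theorem bicardinality_not_relativelyElementarilyEquivalent :
    (∃ d₁ : Set ℕ → ℕ, Function.Surjective d₁ ∧ ∀ X Y : Set ℕ, d₁ X = d₁ Y ↔ Ebc X Y) ∧
    (∀ d₁ : Set ℕ → ℕ, Function.Surjective d₁ → (∀ X Y : Set ℕ, d₁ X = d₁ Y ↔ Ebc X Y) →
      ∀ d₂ : Set ℕ → ℕ, (∀ X : Set ℕ, d₂ X = 2 * d₁ X) →
        (∀ X Y : Set ℕ, d₂ X = d₂ Y ↔ Ebc X Y) ∧
        d₂ (Set.range d₂ \ {d₂ (Set.range d₂)}) = d₂ (Set.range d₂) ∧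
        d₁ (Set.univ \ {d₁ (Set.univ : Set ℕ)}) ≠ d₁ (Set.univ : Set ℕ)) := by
  constructor
  · exact ⟨d1fun, d1_surj, d1_realizes⟩
  · intro d₁ hsurj hreal d₂ hd₂
    have hreal2 : ∀ X Y : Set ℕ, d₂ X = d₂ Y ↔ Ebc X Y := by
      intro X Y; rw [hd₂, hd₂, ← hreal]; omega
    refine ⟨hreal2, ?_, ?_⟩
    · set A := Set.range d₂ with hA
      have hAev : A = {m | Even m} := by
        ext m
        simp only [hA, Set.mem_range, Set.mem_setOf_eq]
        constructor
        · rintro ⟨X, rfl⟩; exact ⟨d₁ X, by rw [hd₂]; omega⟩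
        · rintro ⟨k, hk⟩
          obtain ⟨X, hX⟩ := hsurj k
          exact ⟨X, by rw [hd₂, hX]; omega⟩
      have hAinf : A.Infinite := hAev ▸ evens_infinite
      have hAcinf : Aᶜ.Infinite := hAev ▸ odds_infinite
      rw [hreal2]
      constructor
      · rw [cardEq]
        exact Or.inr ⟨hAinf.diff (Set.finite_singleton _), hAinf⟩
      · rw [cardEq]
        refine Or.inr ⟨Set.Infinite.mono ?_ hAcinf, hAcinf⟩
        intro x hx
        simp only [Set.mem_compl_iff, Set.mem_diff, Set.mem_singleton_iff, not_and, not_not] at hx ⊢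
        tauto
    · intro h
      obtain ⟨-, h2⟩ := (hreal _ _).mp h
      rw [cardEq] at h2
      have e1 : ((Set.univ \ {d₁ Set.univ} : Set ℕ)ᶜ) = {d₁ Set.univ} := by
        ext x; simp
      have e2 : ((Set.univ : Set ℕ)ᶜ) = ∅ := by simp
      rw [e1, e2] at h2
      rcases h2 with ⟨-, -, hc⟩ | ⟨hi, -⟩
      · simp at hc
      · exact hi (Set.finite_singleton _)
end

section
/- (The Bicardinality Principle is surjectively relatively categorical) Let M be a type and E the relation on Set M given by E(X,Y) := Cardinal.mk X = Cardinal.mk Y ∧ Cardinal.mk ↥(Xᶜ) = Cardinal.mk ↥(Yᶜ). Then for all surjective ∂₁, ∂₂ : Set M → M realizing A[E] and every X : Set M, E(X, ∂₂ '' (∂₁ ⁻¹' X)) holds. -/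
/-- The Bicardinality Principle is surjectively relatively categorical: for any two
surjective abstraction operators realizing it and any `X`, the set `X` and its image under
the natural bijection are equinumerous with equinumerous complements. -/
theorem bicardinality_surjectivelyRelativelyCategorical {M : Type*} (d₁ d₂ : Set M → M)
    (hs1 : Function.Surjective d₁) (hs2 : Function.Surjective d₂)
    (h1 : ∀ X Y : Set M, d₁ X = d₁ Y ↔
      (Cardinal.mk X = Cardinal.mk Y ∧ Cardinal.mk ↥(Xᶜ) = Cardinal.mk ↥(Yᶜ)))
    (h2 : ∀ X Y : Set M, d₂ X = d₂ Y ↔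
      (Cardinal.mk X = Cardinal.mk Y ∧ Cardinal.mk ↥(Xᶜ) = Cardinal.mk ↥(Yᶜ)))
    (X : Set M) :
    Cardinal.mk X = Cardinal.mk ↥(d₂ '' (d₁ ⁻¹' X)) ∧
      Cardinal.mk ↥(Xᶜ) = Cardinal.mk ↥((d₂ '' (d₁ ⁻¹' X))ᶜ) := by
  obtain ⟨s, hs⟩ := hs1.hasRightInverse
  set g : M → M := fun m => d₂ (s m) with hg
  have hginj : Function.Injective g := by
    intro a b hab
    have hE := (h2 _ _).mp hab
    have : d₁ (s a) = d₁ (s b) := (h1 _ _).mpr hE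
    rw [hs a, hs b] at this
    exact this
  have hgsurj : Function.Surjective g := by
    intro y
    obtain ⟨A, rfl⟩ := hs2 y
    refine ⟨d₁ A, ?_⟩
    have : d₁ (s (d₁ A)) = d₁ A := hs (d₁ A)
    exact (h2 _ _).mpr ((h1 _ _).mp this)
  have hbij : Function.Bijective g := ⟨hginj, hgsurj⟩
  have himg : d₂ '' (d₁ ⁻¹' X) = g '' X := by
    ext y
    constructor
    · rintro ⟨A, hA, rfl⟩
      refine ⟨d₁ A, hA, ?_⟩
      have : d₁ (s (d₁ A)) = d₁ A := hs (d₁ A)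
      exact (h2 _ _).mpr ((h1 _ _).mp this)
    · rintro ⟨x, hx, rfl⟩
      exact ⟨s x, by simpa [Set.mem_preimage, hs x] using hx, rfl⟩
  rw [himg]
  constructor
  · exact (Cardinal.mk_image_eq hginj).symm
  · rw [← Set.image_compl_eq hbij]
    exact (Cardinal.mk_image_eq hginj).symm
end

section
/- Let n ≥ 1 and let M be a type with exactly 2n elements. Say Cmp(X) holds for X : Set M if there exists Y : Set M with Cardinal.mk X = Cardinal.mk Y, X ∩ Y = ∅ and X ∪ Y = Set.univ. Define E(X,Y) := (Cmp X ∨ Cmp Y) → (X = Y ∨ (Cardinal.mk X = Cardinal.mk Y ∧ X ∩ Y = ∅ ∧ X ∪ Y = Set.univ)). Then E is an equivalence relation on Set M, and the quotient of Set M by E has exactly (Nat.choose (2*n) n) / 2 + 1 elements. -/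
/-- `X` is a complement: there is a set equinumerous with `X`, disjoint from `X`, whose
union with `X` is the universe. -/
def Cmp {M : Type*} (X : Set M) : Prop :=
  ∃ Y : Set M, Cardinal.mk X = Cardinal.mk Y ∧ X ∩ Y = ∅ ∧ X ∪ Y = Set.univ

/-- The complementation relation. -/
def Ecmp {M : Type*} (X Y : Set M) : Prop :=
  (Cmp X ∨ Cmp Y) →
    (X = Y ∨ (Cardinal.mk X = Cardinal.mk Y ∧ X ∩ Y = ∅ ∧ X ∪ Y = Set.univ))

section Aux

variable {M : Type*}

lemma myCastNcard [Finite M] (X : Set M) : (X.ncard : Cardinal) = Cardinal.mk X := by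
  rw [← Nat.card_coe_set_eq]
  exact Cardinal.cast_toNat_of_lt_aleph0 (Cardinal.lt_aleph0_of_finite _)

lemma myMkEqIff [Finite M] (X Y : Set M) :
    Cardinal.mk X = Cardinal.mk Y ↔ X.ncard = Y.ncard := by
  rw [← myCastNcard, ← myCastNcard, Nat.cast_inj]

lemma myEqCompl {X Y : Set M} (h1 : X ∩ Y = ∅) (h2 : X ∪ Y = Set.univ) : Y = Xᶜ := by
  ext x
  have hx1 : x ∉ X ∩ Y := by rw [h1]; exact Set.notMem_empty x
  have hx2 : x ∈ X ∪ Y := by rw [h2]; trivial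
  simp only [Set.mem_inter_iff, Set.mem_union, Set.mem_compl_iff] at *
  tauto

lemma myCmpIff [Finite M] {n : ℕ} (hM : Nat.card M = 2 * n) (X : Set M) :
    Cmp X ↔ X.ncard = n := by
  have hs := Set.ncard_add_ncard_compl X
  constructor
  · rintro ⟨Y, h1, h2, h3⟩
    rw [myEqCompl h2 h3] at h1
    rw [myMkEqIff] at h1
    omega
  · intro h
    exact ⟨Xᶜ, (myMkEqIff _ _).2 (by omega), Set.inter_compl_self X,
      Set.union_compl_self X⟩

lemma myEcmpChar [Finite M] {n : ℕ} (hM : Nat.card M = 2 * n) (X Y : Set M) :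
    Ecmp X Y ↔ (X = Y ∨ (X.ncard = n ∧ Y = Xᶜ) ∨ (X.ncard ≠ n ∧ Y.ncard ≠ n)) := by
  have hsX := Set.ncard_add_ncard_compl X
  constructor
  · intro h
    by_cases hX : X.ncard = n
    · rcases h (Or.inl ((myCmpIff hM X).2 hX)) with h | ⟨h1, h2, h3⟩
      · exact Or.inl h
      · exact Or.inr (Or.inl ⟨hX, myEqCompl h2 h3⟩)
    · by_cases hY : Y.ncard = n
      · rcases h (Or.inr ((myCmpIff hM Y).2 hY)) with h | ⟨h1, h2, h3⟩
        · exact Or.inl h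
        · rw [myMkEqIff] at h1
          omega
      · exact Or.inr (Or.inr ⟨hX, hY⟩)
  · rintro (rfl | ⟨hX, rfl⟩ | ⟨hX, hY⟩) hc
    · exact Or.inl rfl
    · exact Or.inr ⟨(myMkEqIff _ _).2 (by omega), Set.inter_compl_self X,
        Set.union_compl_self X⟩
    · rcases hc with hc | hc
      · exact absurd ((myCmpIff hM X).1 hc) hX
      · exact absurd ((myCmpIff hM Y).1 hc) hY

lemma myEquiv [Finite M] {n : ℕ} (hM : Nat.card M = 2 * n) :
    Equivalence (@Ecmp M) := by
  constructor
  · exact fun X _ => Or.inl rfl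
  · intro X Y h
    rw [myEcmpChar hM] at h ⊢
    have hsX := Set.ncard_add_ncard_compl X
    rcases h with rfl | ⟨hX, rfl⟩ | ⟨hX, hY⟩
    · exact Or.inl rfl
    · exact Or.inr (Or.inl ⟨by omega, (compl_compl X).symm⟩)
    · exact Or.inr (Or.inr ⟨hY, hX⟩)
  · intro X Y Z h1 h2
    rw [myEcmpChar hM] at h1 h2 ⊢
    have hsX := Set.ncard_add_ncard_compl X
    have hsY := Set.ncard_add_ncard_compl Y
    rcases h1 with rfl | ⟨hX, rfl⟩ | ⟨hX, hY⟩
    · exact h2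
    · rcases h2 with rfl | ⟨hXc, rfl⟩ | ⟨hXc, hZ⟩
      · exact Or.inr (Or.inl ⟨hX, rfl⟩)
      · exact Or.inl (compl_compl X).symm
      · omega
    · rcases h2 with rfl | ⟨hY', rfl⟩ | ⟨hY', hZ⟩
      · exact Or.inr (Or.inr ⟨hX, hY⟩)
      · omega
      · exact Or.inr (Or.inr ⟨hX, hZ⟩)

end Aux

/-- On a domain with exactly `2n` elements (`n ≥ 1`), the complementation relation is an
equivalence relation with exactly `(2n).choose n / 2 + 1` classes. -/
theorem complementation_card_quotient {M : Type*} (n : ℕ) (hn : 1 ≤ n)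
    (hM : Nat.card M = 2 * n) :
    ∃ hE : Equivalence (@Ecmp M),
      Nat.card (Quotient (Setoid.mk Ecmp hE)) = (Nat.choose (2 * n) n) / 2 + 1 := by
  classical
  have hfin : Finite M := Nat.finite_of_card_ne_zero (by omega)
  haveI := Fintype.ofFinite M
  obtain ⟨m₀⟩ : Nonempty M := Nat.card_pos_iff.1 (by omega) |>.1
  refine ⟨myEquiv hM, ?_⟩
  set T : Set (Set M) := {X : Set M | X.ncard = n ∧ m₀ ∈ X} with hT
  -- the classifying map
  have hclc : ∀ X : Set M, X.ncard = n → Xᶜ.ncard = n := by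
    intro X hX
    have := Set.ncard_add_ncard_compl X
    omega
  set f : Set M → Option ↥T := fun X =>
    if h : X.ncard = n then
      (if hm : m₀ ∈ X then some ⟨X, h, hm⟩ else some ⟨Xᶜ, hclc X h, hm⟩)
    else none with hf
  have hresp : ∀ X Y : Set M, Ecmp X Y → f X = f Y := by
    intro X Y h
    rw [myEcmpChar hM] at h
    rcases h with rfl | ⟨hX, rfl⟩ | ⟨hX, hY⟩
    · rfl
    · have hXc : Xᶜ.ncard = n := hclc X hX
      by_cases hm : m₀ ∈ X
      · rw [hf]
        simp only [dif_pos hX, dif_pos hXc, dif_pos hm,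
          dif_neg (show m₀ ∉ Xᶜ from fun hc => hc hm)]
        exact congrArg some (Subtype.ext (compl_compl X).symm)
      · rw [hf]
        simp only [dif_pos hX, dif_pos hXc, dif_neg hm, dif_pos (show m₀ ∈ Xᶜ from hm)]
    · rw [hf]
      simp only [dif_neg hX, dif_neg hY]
  set F : Quotient (Setoid.mk Ecmp (myEquiv hM)) → Option ↥T :=
    Quotient.lift f hresp with hF
  have hFbij : Function.Bijective F := by
    constructor
    · intro a b
      induction a using Quotient.ind
      induction b using Quotient.ind
      rename_i X Y
      intro h
      replace h : f X = f Y := h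
      apply Quotient.sound
      show Ecmp X Y
      rw [myEcmpChar hM]
      by_cases hX : X.ncard = n
      · by_cases hY : Y.ncard = n
        · rw [hf] at h
          simp only [dif_pos hX, dif_pos hY] at h
          by_cases hmX : m₀ ∈ X <;> by_cases hmY : m₀ ∈ Y
          · rw [dif_pos hmX, dif_pos hmY, Option.some_inj, Subtype.mk.injEq] at h
            exact Or.inl h
          · rw [dif_pos hmX, dif_neg hmY, Option.some_inj, Subtype.mk.injEq] at h
            exact Or.inr (Or.inl ⟨hX, by rw [h, compl_compl]⟩)
          · rw [dif_neg hmX, dif_pos hmY, Option.some_inj, Subtype.mk.injEq] at h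
            exact Or.inr (Or.inl ⟨hX, h.symm⟩)
          · rw [dif_neg hmX, dif_neg hmY, Option.some_inj, Subtype.mk.injEq] at h
            exact Or.inl (compl_injective h)
        · rw [hf] at h
          simp only [dif_pos hX, dif_neg hY] at h
          by_cases hmX : m₀ ∈ X <;> simp [hmX] at h
      · by_cases hY : Y.ncard = n
        · rw [hf] at h
          simp only [dif_neg hX, dif_pos hY] at h
          by_cases hmY : m₀ ∈ Y <;> simp [hmY] at h
        · exact Or.inr (Or.inr ⟨hX, hY⟩)
    · rintro (_ | ⟨X, hX, hm⟩)
      · refine ⟨Quotient.mk _ (∅ : Set M), ?_⟩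
        show f ∅ = none
        rw [hf]
        simp only [dif_neg (show (∅ : Set M).ncard ≠ n by rw [Set.ncard_empty]; omega)]
      · refine ⟨Quotient.mk _ X, ?_⟩
        show f X = some ⟨X, hX, hm⟩
        rw [hf]
        simp only [dif_pos hX, dif_pos hm]
  have hQ : Nat.card (Quotient (Setoid.mk Ecmp (myEquiv hM))) = Nat.card (Option ↥T) :=
    Nat.card_eq_of_bijective F hFbij
  rw [hQ, Finite.card_option]
  -- now compute 2 * Nat.card T = (2n).choose n
  set g : ↥T ⊕ ↥T → {X : Set M // X.ncard = n} :=
    Sum.elim (fun X => ⟨X.1, X.2.1⟩) (fun X => ⟨(X.1)ᶜ, hclc X.1 X.2.1⟩) with hg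
  have hgbij : Function.Bijective g := by
    constructor
    · rintro (⟨X, hX, hmX⟩ | ⟨X, hX, hmX⟩) (⟨Y, hY, hmY⟩ | ⟨Y, hY, hmY⟩) h <;>
        rw [hg] at h <;>
        simp only [Sum.elim_inl, Sum.elim_inr, Subtype.mk.injEq] at h
      · simp [h]
      · exact absurd (h ▸ hmX : m₀ ∈ Yᶜ) (fun hc => hc hmY)
      · exact absurd (h ▸ hmY : m₀ ∈ Xᶜ) (fun hc => hc hmX)
      · simp [compl_injective h]
    · rintro ⟨X, hX⟩
      by_cases hm : m₀ ∈ X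
      · exact ⟨Sum.inl ⟨X, hX, hm⟩, rfl⟩
      · refine ⟨Sum.inr ⟨Xᶜ, hclc X hX, hm⟩, ?_⟩
        rw [hg]
        simp only [Sum.elim_inr]
        exact Subtype.ext (compl_compl X)
  have h2T : Nat.card ↥T + Nat.card ↥T = Nat.card {X : Set M // X.ncard = n} := by
    rw [← Nat.card_sum]
    exact Nat.card_eq_of_bijective g hgbij
  have hA : Nat.card {X : Set M // X.ncard = n} = Nat.choose (2 * n) n := by
    have e : {X : Set M // X.ncard = n} ≃ {s : Finset M // s.card = n} :=
      { toFun := fun X => ⟨X.1.toFinite.toFinset, by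
          rw [← Set.ncard_eq_toFinset_card X.1 X.1.toFinite]; exact X.2⟩
        invFun := fun s => ⟨(s.1 : Set M), by rw [Set.ncard_coe_finset]; exact s.2⟩
        left_inv := fun X => Subtype.ext (Set.Finite.coe_toFinset _)
        right_inv := fun s => Subtype.ext (Finset.finite_toSet_toFinset s.1) }
    rw [Nat.card_congr e, Nat.card_eq_fintype_card, Fintype.card_subtype]
    have : (Finset.univ.filter fun s : Finset M => s.card = n) =
        Finset.powersetCard n Finset.univ := by
      ext s
      simp [Finset.mem_powersetCard_univ]
    rw [this, Finset.card_powersetCard, Finset.card_univ, ← Nat.card_eq_fintype_card, hM]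
  omega
end

section
/- Let M be a finite nonempty type and let E be the complementation relation on Set M: E(X,Y) := (Cmp X ∨ Cmp Y) → (X = Y ∨ (Cardinal.mk X = Cardinal.mk Y ∧ X ∩ Y = ∅ ∧ X ∪ Y = Set.univ)), where Cmp(X) holds iff there exists Y with Cardinal.mk X = Cardinal.mk Y, X ∩ Y = ∅ and X ∪ Y = Set.univ. Then there exists a function ∂ : Set M → M realizing A[E] if and only if Nat.card M is odd, or Nat.card M = 2, or Nat.card M = 4. -/
lemma aux_mk_iff {M : Type*} [Finite M] (X Y : Set M) :
    Cardinal.mk X = Cardinal.mk Y ↔ X.ncard = Y.ncard := by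
  have : Fintype X := Fintype.ofFinite X
  have : Fintype Y := Fintype.ofFinite Y
  rw [Cardinal.eq, ← Nat.card_coe_set_eq, ← Nat.card_coe_set_eq,
    Nat.card_eq_fintype_card, Nat.card_eq_fintype_card]
  exact ⟨fun ⟨e⟩ => Fintype.card_congr e, fun h => Fintype.card_eq.1 h⟩

lemma aux_compl_iff {M : Type*} (X Y : Set M) :
    X ∩ Y = ∅ ∧ X ∪ Y = Set.univ ↔ Y = Xᶜ := by
  constructor
  · rintro ⟨h1, h2⟩
    ext x
    simp only [Set.mem_compl_iff]
    constructor
    · intro hy hx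
      exact (Set.eq_empty_iff_forall_notMem.1 h1 x) ⟨hx, hy⟩
    · intro hx
      rcases (h2 ▸ Set.mem_univ x : x ∈ X ∪ Y) with h | h
      · exact absurd h hx
      · exact h
  · rintro rfl
    simp

lemma aux_cmp_iff {M : Type*} [Finite M] (X : Set M) :
    Cmp X ↔ 2 * X.ncard = Nat.card M := by
  have hsum := Set.ncard_add_ncard_compl X
  constructor
  · rintro ⟨Y, hc, hi, hu⟩
    have hY : Y = Xᶜ := (aux_compl_iff X Y).1 ⟨hi, hu⟩
    subst hY
    rw [aux_mk_iff] at hc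
    omega
  · intro h
    exact ⟨Xᶜ, (aux_mk_iff _ _).2 (by omega), by simp, by simp⟩

lemma aux_ecmp_iff {M : Type*} [Finite M] (X Y : Set M) :
    Ecmp X Y ↔
      ((2 * X.ncard = Nat.card M ∨ 2 * Y.ncard = Nat.card M) →
        (X = Y ∨ (Y = Xᶜ ∧ 2 * X.ncard = Nat.card M))) := by
  have hsum := Set.ncard_add_ncard_compl X
  unfold Ecmp
  rw [aux_cmp_iff, aux_cmp_iff]
  refine imp_congr Iff.rfl (or_congr Iff.rfl ?_)
  rw [aux_mk_iff]
  constructor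
  · rintro ⟨hc, hi, hu⟩
    have hY : Y = Xᶜ := (aux_compl_iff X Y).1 ⟨hi, hu⟩
    subst hY
    exact ⟨rfl, by omega⟩
  · rintro ⟨rfl, h⟩
    exact ⟨by omega, by simp, by simp⟩

lemma aux_realize_of_fin {M : Type*} [Finite M] {n : ℕ} (e : M ≃ Fin n)
    (δ : Finset (Fin n) → Fin n)
    (hδ : ∀ A B : Finset (Fin n), δ A = δ B ↔
      ((2 * A.card = n ∨ 2 * B.card = n) → (A = B ∨ (B = Aᶜ ∧ 2 * A.card = n)))) :
    ∃ d : Set M → M, ∀ X Y : Set M, d X = d Y ↔ Ecmp X Y := by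
  classical
  have hn : Nat.card M = n := by
    rw [Nat.card_congr e, Nat.card_eq_fintype_card, Fintype.card_fin]
  set F : Set M → Finset (Fin n) := fun X => (e '' X).toFinset with hF
  have hcard : ∀ X : Set M, (F X).card = X.ncard := by
    intro X
    rw [hF, ← Set.ncard_eq_toFinset_card', Set.ncard_image_of_injective _ e.injective]
  have hinj : ∀ X Y : Set M, F X = F Y ↔ X = Y := by
    intro X Y
    rw [hF, Set.toFinset_inj, Set.image_eq_image e.injective]
  have hcompl : ∀ X Y : Set M, (F Y = (F X)ᶜ) ↔ Y = Xᶜ := by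
    intro X Y
    rw [← Finset.coe_inj, Finset.coe_compl, hF, Set.coe_toFinset, Set.coe_toFinset,
      ← Set.image_compl_eq e.bijective, Set.image_eq_image e.injective]
  refine ⟨fun X => e.symm (δ (F X)), fun X Y => ?_⟩
  rw [EquivLike.apply_eq_iff_eq, hδ, aux_ecmp_iff, hn]
  simp only [hcard, hinj, hcompl]

def delta2 : Finset (Fin 2) → Fin 2 := fun A => if A.card = 1 then 1 else 0

def delta4 : Finset (Fin 4) → Fin 4 := fun A =>
  if A = {0, 1} ∨ A = {2, 3} then 1
  else if A = {0, 2} ∨ A = {1, 3} then 2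
  else if A = {0, 3} ∨ A = {1, 2} then 3
  else 0

lemma delta2_spec : ∀ A B : Finset (Fin 2), delta2 A = delta2 B ↔
    ((2 * A.card = 2 ∨ 2 * B.card = 2) → (A = B ∨ (B = Aᶜ ∧ 2 * A.card = 2))) := by decide

lemma delta4_spec : ∀ A B : Finset (Fin 4), delta4 A = delta4 B ↔
    ((2 * A.card = 4 ∨ 2 * B.card = 4) → (A = B ∨ (B = Aᶜ ∧ 2 * A.card = 4))) := by decide

lemma aux_cb_lt : ∀ m : ℕ, 3 ≤ m → 4 * m < Nat.centralBinom m := by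
  intro m hm
  induction m with
  | zero => omega
  | succ k ih =>
    rcases Nat.lt_or_ge k 3 with h | h
    · have hk : k = 2 := by omega
      subst hk
      decide
    · have h1 := ih h
      have h2 := Nat.succ_mul_centralBinom_succ k
      nlinarith [Nat.centralBinom_pos k]

lemma aux_forward {M : Type*} [Finite M] [Nonempty M]
    (d : Set M → M) (hd : ∀ X Y : Set M, d X = d Y ↔ Ecmp X Y)
    (hev : Even (Nat.card M)) (h2 : Nat.card M ≠ 2) (h4 : Nat.card M ≠ 4) : False := by
  classical
  have hF : Fintype M := Fintype.ofFinite M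
  obtain ⟨m, hm⟩ := hev
  have hn : Nat.card M = Fintype.card M := Nat.card_eq_fintype_card
  have hn0 : Nat.card M ≠ 0 := Nat.card_pos.ne'
  have hm3 : 3 ≤ m := by omega
  set s : Finset (Finset M) := Finset.univ.powersetCard m with hs
  have hcard_s : s.card = (Nat.card M).choose m := by
    rw [hs, Finset.card_powersetCard, Finset.card_univ, hn]
  have key : s.card ≤ 2 * (s.image (fun A : Finset M => d (↑A : Set M))).card := by
    apply Finset.card_le_mul_card_image
    intro b hb
    obtain ⟨A, hA, hAb⟩ := Finset.mem_image.1 hb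
    have hsub : s.filter (fun (a : Finset M) => d ↑a = b) ⊆ {A, Aᶜ} := by
      intro B hB
      rw [Finset.mem_filter] at hB
      have hdd : d (↑B : Set M) = d (↑A : Set M) := hB.2.trans hAb.symm
      have hE := (hd (↑B : Set M) (↑A : Set M)).1 hdd
      rw [aux_ecmp_iff] at hE
      have hcB : (↑B : Set M).ncard = m := by
        rw [Set.ncard_coe_finset]
        exact Finset.mem_powersetCard_univ.1 hB.1
      rcases hE (Or.inl (by omega)) with h | h
      · exact Finset.mem_insert.2 (Or.inl (Finset.coe_inj.1 h))
      · have hAB : A = Bᶜ := Finset.coe_inj.1 (by rw [Finset.coe_compl]; exact h.1)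
        have hBA : B = Aᶜ := by rw [hAB, compl_compl]
        exact Finset.mem_insert.2 (Or.inr (Finset.mem_singleton.2 hBA))
    calc (s.filter (fun (a : Finset M) => d ↑a = b)).card
        ≤ ({A, Aᶜ} : Finset (Finset M)).card := Finset.card_le_card hsub
      _ ≤ 2 := Finset.card_insert_le _ _ |>.trans (by simp)
  have himg : (s.image (fun A : Finset M => d (↑A : Set M))).card ≤ Nat.card M := by
    rw [hn]
    exact (Finset.card_le_univ _).trans (by simp)
  have hbin := aux_cb_lt m hm3
  rw [Nat.centralBinom_eq_two_mul_choose, show 2 * m = Nat.card M by omega] at hbin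
  omega

/-- The Complementation Principle has a standard model on a finite nonempty domain iff the
domain has odd cardinality, or cardinality 2 or 4. -/
theorem complementation_exists_realization_iff {M : Type*} [Finite M] [Nonempty M] :
    (∃ d : Set M → M, ∀ X Y : Set M, d X = d Y ↔ Ecmp X Y) ↔
      (Odd (Nat.card M) ∨ Nat.card M = 2 ∨ Nat.card M = 4) := by
  constructor
  · rintro ⟨d, hd⟩
    by_contra h
    push_neg at h
    obtain ⟨h1, h2, h4⟩ := h
    exact aux_forward d hd (Nat.not_odd_iff_even.1 h1) h2 h4
  · rintro (hodd | h2 | h4)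
    · refine ⟨fun _ => Classical.arbitrary M, fun X Y => ?_⟩
      constructor
      · intro _
        rw [aux_ecmp_iff]
        obtain ⟨t, ht⟩ := hodd
        rintro (h | h) <;> omega
      · intro _
        rfl
    · exact aux_realize_of_fin (Finite.equivFinOfCardEq h2) delta2 delta2_spec
    · exact aux_realize_of_fin (Finite.equivFinOfCardEq h4) delta4 delta4_spec
end

section
/- (The Complementation Principle is not surjectively relatively categorical) Let E be the complementation relation on Set (Fin 4): E(X,Y) := (Cmp X ∨ Cmp Y) → (X = Y ∨ (Cardinal.mk X = Cardinal.mk Y ∧ X ∩ Y = ∅ ∧ X ∪ Y = Set.univ)), where Cmp(X) holds iff there exists Y with Cardinal.mk X = Cardinal.mk Y, X ∩ Y = ∅ and X ∪ Y = Set.univ. Then there exist surjective functions ∂₁, ∂₂ : Set (Fin 4) → Fin 4, both realizing A[E], and a set X : Set (Fin 4) with X ⊆ Set.range ∂₁, such that E(X, ∂₂ '' (∂₁ ⁻¹' X)) fails. Consequently the Complementation Principle is not naturally relatively categorical. -/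
/-- Finset analogue of the conjunction inside `Cmp`/`Ecmp`. -/
def PF (s t : Finset (Fin 4)) : Prop :=
  s.card = t.card ∧ s ∩ t = ∅ ∧ s ∪ t = Finset.univ

/-- Finset analogue of `Cmp`. -/
def CmpF (s : Finset (Fin 4)) : Prop := ∃ t, PF s t

/-- Finset analogue of `Ecmp`. -/
def EF (s t : Finset (Fin 4)) : Prop := (CmpF s ∨ CmpF t) → (s = t ∨ PF s t)

def f1 : Finset (Fin 4) → Fin 4 := fun s =>
  if s = {0,1} ∨ s = {2,3} then 1
  else if s = {0,2} ∨ s = {1,3} then 2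
  else if s = {0,3} ∨ s = {1,2} then 3
  else 0

def f2 : Finset (Fin 4) → Fin 4 := fun s =>
  if s = {0,1} ∨ s = {2,3} then 2
  else if s = {0,2} ∨ s = {1,3} then 1
  else if s = {0,3} ∨ s = {1,2} then 3
  else 0

lemma f1_spec : ∀ s t : Finset (Fin 4), f1 s = f1 t ↔ EF s t := by
  unfold EF CmpF PF; decide

lemma f2_spec : ∀ s t : Finset (Fin 4), f2 s = f2 t ↔ EF s t := by
  unfold EF CmpF PF; decide

open Classical in
noncomputable def d1 : Set (Fin 4) → Fin 4 := fun X => f1 X.toFinset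

open Classical in
noncomputable def d2 : Set (Fin 4) → Fin 4 := fun X => f2 X.toFinset

open Classical

lemma mk_eq_toFinset_card (X : Set (Fin 4)) : Cardinal.mk X = X.toFinset.card := by
  conv_lhs => rw [← Set.coe_toFinset X]
  exact Cardinal.mk_coe_finset

lemma P_iff (X Y : Set (Fin 4)) :
    (Cardinal.mk X = Cardinal.mk Y ∧ X ∩ Y = ∅ ∧ X ∪ Y = Set.univ) ↔
      PF X.toFinset Y.toFinset := by
  unfold PF
  rw [mk_eq_toFinset_card, mk_eq_toFinset_card, Nat.cast_inj]
  constructor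
  · rintro ⟨h1, h2, h3⟩
    refine ⟨h1, ?_, ?_⟩
    · have h := Set.toFinset_inj.mpr h2
      rwa [Set.toFinset_inter, Set.toFinset_empty] at h
    · have h := Set.toFinset_inj.mpr h3
      rwa [Set.toFinset_union, Set.toFinset_univ] at h
  · rintro ⟨h1, h2, h3⟩
    refine ⟨h1, ?_, ?_⟩
    · rw [← Set.toFinset_inj, Set.toFinset_inter, Set.toFinset_empty]; exact h2
    · rw [← Set.toFinset_inj, Set.toFinset_union, Set.toFinset_univ]; exact h3

lemma Cmp_iff (X : Set (Fin 4)) : Cmp X ↔ CmpF X.toFinset := by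
  constructor
  · rintro ⟨Y, h⟩; exact ⟨Y.toFinset, (P_iff X Y).1 h⟩
  · rintro ⟨t, h⟩
    refine ⟨(↑t : Set (Fin 4)), (P_iff X _).2 ?_⟩
    rwa [Finset.toFinset_coe]

lemma Ecmp_iff (X Y : Set (Fin 4)) : Ecmp X Y ↔ EF X.toFinset Y.toFinset := by
  unfold Ecmp EF
  rw [Cmp_iff, Cmp_iff, P_iff, ← Set.toFinset_inj]

lemma d1_coe (s : Finset (Fin 4)) : d1 (↑s) = f1 s := by
  unfold d1; rw [Finset.toFinset_coe]

lemma d2_coe (s : Finset (Fin 4)) : d2 (↑s) = f2 s := by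
  unfold d2; rw [Finset.toFinset_coe]

lemma d1_surj_s16 : Function.Surjective d1 := by
  intro y
  fin_cases y
  · exact ⟨(↑(∅ : Finset (Fin 4)) : Set (Fin 4)), by rw [d1_coe]; decide⟩
  · exact ⟨(↑({0,1} : Finset (Fin 4)) : Set (Fin 4)), by rw [d1_coe]; decide⟩
  · exact ⟨(↑({0,2} : Finset (Fin 4)) : Set (Fin 4)), by rw [d1_coe]; decide⟩
  · exact ⟨(↑({0,3} : Finset (Fin 4)) : Set (Fin 4)), by rw [d1_coe]; decide⟩

lemma d2_surj : Function.Surjective d2 := by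
  intro y
  fin_cases y
  · exact ⟨(↑(∅ : Finset (Fin 4)) : Set (Fin 4)), by rw [d2_coe]; decide⟩
  · exact ⟨(↑({0,2} : Finset (Fin 4)) : Set (Fin 4)), by rw [d2_coe]; decide⟩
  · exact ⟨(↑({0,1} : Finset (Fin 4)) : Set (Fin 4)), by rw [d2_coe]; decide⟩
  · exact ⟨(↑({0,3} : Finset (Fin 4)) : Set (Fin 4)), by rw [d2_coe]; decide⟩

/-- The Complementation Principle is not surjectively relatively categorical (hence not
naturally relatively categorical): on a domain of size 4 there are two surjective
realizations and a set `X ⊆ Set.range ∂₁` such that `E(X, ∂₂ '' (∂₁ ⁻¹' X))` fails. -/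
theorem complementation_not_surjectivelyRelativelyCategorical :
    ∃ d₁ d₂ : Set (Fin 4) → Fin 4,
      Function.Surjective d₁ ∧ Function.Surjective d₂ ∧
      (∀ X Y : Set (Fin 4), d₁ X = d₁ Y ↔ Ecmp X Y) ∧
      (∀ X Y : Set (Fin 4), d₂ X = d₂ Y ↔ Ecmp X Y) ∧
      ∃ X : Set (Fin 4), X ⊆ Set.range d₁ ∧ ¬ Ecmp X (d₂ '' (d₁ ⁻¹' X)) := by
  refine ⟨d1, d2, d1_surj_s16, d2_surj,
    fun X Y => by rw [Ecmp_iff]; exact f1_spec X.toFinset Y.toFinset,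
    fun X Y => by rw [Ecmp_iff]; exact f2_spec X.toFinset Y.toFinset,
    ({0,1} : Set (Fin 4)), ?_, ?_⟩
  · rw [d1_surj_s16.range_eq]; exact Set.subset_univ _
  · -- the image contains 0 and 2; `Ecmp` with `{0,1}` then fails
    set Z := d2 '' (d1 ⁻¹' ({0,1} : Set (Fin 4))) with hZ
    have hX : ({0,1} : Set (Fin 4)) = (↑({0,1} : Finset (Fin 4)) : Set (Fin 4)) := by
      simp
    have h0 : (0 : Fin 4) ∈ Z := by
      refine ⟨(↑(∅ : Finset (Fin 4)) : Set (Fin 4)), ?_, ?_⟩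
      · simp only [Set.mem_preimage, d1_coe]
        have : f1 ∅ = 0 := by decide
        rw [this]; exact Or.inl rfl
      · rw [d2_coe]; decide
    have h2 : (2 : Fin 4) ∈ Z := by
      refine ⟨(↑({0,1} : Finset (Fin 4)) : Set (Fin 4)), ?_, ?_⟩
      · simp only [Set.mem_preimage, d1_coe]
        have : f1 {0,1} = 1 := by decide
        rw [this]; exact Or.inr rfl
      · rw [d2_coe]; decide
    intro hE
    have hCmp : Cmp ({0,1} : Set (Fin 4)) := by
      rw [Cmp_iff]
      refine ⟨{2,3}, ?_⟩
      rw [hX, Finset.toFinset_coe]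
      unfold PF; refine ⟨by decide, by decide, by decide⟩
    rcases hE (Or.inl hCmp) with h | ⟨_, hdisj, _⟩
    · rw [← h] at h2
      simp at h2
    · have : (0 : Fin 4) ∈ ({0,1} : Set (Fin 4)) ∩ Z := ⟨by simp, h0⟩
      rw [hdisj] at this
      exact this
end

section
/- Let M be a type with Cardinal.mk M = Cardinal.aleph 1, and define E on Set M by E(X,Y) := Cardinal.mk X = Cardinal.mk Y ∧ (X = Set.univ ↔ Y = Set.univ) (this is the paper's equivalence relation (28) interpreted on a domain of cardinality ω₁: the universe is the only member of its own class, all other sets of full cardinality form one class, and smaller sets are partitioned by cardinality). Then E is an equivalence relation on Set M which is cardinality coarsening on small concepts but not cardinality coarsening: there exist X, Y : Set M with Cardinal.mk X = Cardinal.mk Y and ¬E(X,Y). -/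
universe u

/-- The paper's equivalence relation (28), interpreted on a domain of cardinality `ω₁`:
two sets are equivalent iff they are equinumerous and agree on being the universe. -/
def E28 {M : Type u} (X Y : Set M) : Prop :=
  Cardinal.mk X = Cardinal.mk Y ∧ (X = Set.univ ↔ Y = Set.univ)

open Classical in
/-- Invariant classifying `E28`-classes. -/
noncomputable def E28inv {M : Type u} (X : Set M) : Option (ℕ ⊕ Bool) :=
  if X = Set.univ then none
  else if h : Cardinal.mk X < Cardinal.aleph0 then some (Sum.inl (Cardinal.mk X).toNat)
  else if Cardinal.mk X = Cardinal.aleph0 then some (Sum.inr false)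
  else some (Sum.inr true)

/-- On a domain of cardinality `ℵ₁`, the relation `E28` is an equivalence relation which is
cardinality coarsening on small concepts but not cardinality coarsening. -/
theorem E28_ccSmall_not_cc {M : Type u} (hM : Cardinal.mk M = Cardinal.aleph 1) :
    ∃ hE : Equivalence (@E28 M),
      (∀ X Y : Set M, Cardinal.mk X = Cardinal.mk Y →
        Cardinal.mk X ≤ Cardinal.mk (Quotient (Setoid.mk E28 hE)) → E28 X Y) ∧
      (∃ X Y : Set M, Cardinal.mk X = Cardinal.mk Y ∧ ¬ E28 X Y) := by
  have hE : Equivalence (@E28 M) :=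
    ⟨fun X => ⟨rfl, Iff.rfl⟩,
     fun h => ⟨h.1.symm, h.2.symm⟩,
     fun h1 h2 => ⟨h1.1.trans h2.1, h1.2.trans h2.2⟩⟩
  refine ⟨hE, ?_, ?_⟩
  · -- cardinality coarsening on small concepts
    intro X Y hXY hsmall
    -- The invariant descends to the quotient and is injective there.
    have hresp : ∀ A B : Set M, E28 A B → E28inv A = E28inv B := by
      intro A B hAB
      unfold E28inv
      rw [hAB.1]
      by_cases h : A = Set.univ
      · rw [if_pos h, if_pos (hAB.2.mp h)]
      · rw [if_neg h, if_neg (fun hB => h (hAB.2.mpr hB))]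
    set f : Quotient (Setoid.mk E28 hE) → Option (ℕ ⊕ Bool) :=
      Quotient.lift E28inv hresp with hf
    -- first: an injective quotient invariant would need any two non-univ sets of equal small
    -- cardinality to be related; here we just need the cardinality bound on the quotient
    have hquot : Cardinal.mk (Quotient (Setoid.mk E28 hE)) ≤ Cardinal.aleph0 := by
      have hinj : Function.Injective f := by
        intro a b hab
        induction a using Quotient.ind
        induction b using Quotient.ind
        rename_i A B
        simp only [hf, Quotient.lift_mk] at hab
        apply Quotient.sound
        unfold E28inv at hab
        by_cases hA : A = Set.univ <;> by_cases hB : B = Set.univ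
        · exact Quotient.exact (Quotient.sound (s := Setoid.mk E28 hE)
            (show E28 A B from ⟨by rw [hA, hB], by simp [hA, hB]⟩))
        · simp only [if_pos hA, if_neg hB] at hab
          split_ifs at hab <;> exact Option.noConfusion hab
        · simp only [if_neg hA, if_pos hB] at hab
          split_ifs at hab <;> exact Option.noConfusion hab
        · simp only [if_neg hA, if_neg hB] at hab
          refine show E28 A B from ⟨?_, by simp [hA, hB]⟩
          by_cases h1 : Cardinal.mk A < Cardinal.aleph0 <;>
            by_cases h2 : Cardinal.mk B < Cardinal.aleph0
          · rw [dif_pos h1, dif_pos h2] at hab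
            simp only [Option.some.injEq, Sum.inl.injEq] at hab
            rw [← Cardinal.cast_toNat_of_lt_aleph0 h1,
              ← Cardinal.cast_toNat_of_lt_aleph0 h2, hab]
          · rw [dif_pos h1, dif_neg h2] at hab
            split_ifs at hab <;> simp_all
          · rw [dif_neg h1, dif_pos h2] at hab
            split_ifs at hab <;> simp_all
          · rw [dif_neg h1, dif_neg h2] at hab
            by_cases h3 : Cardinal.mk A = Cardinal.aleph0 <;>
              by_cases h4 : Cardinal.mk B = Cardinal.aleph0
            · rw [h3, h4]
            · simp [if_pos h3, if_neg h4] at hab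
            · simp [if_neg h3, if_pos h4] at hab
            · -- both have cardinality ℵ₁
              have key : ∀ Z : Set M, ¬ Cardinal.mk Z < Cardinal.aleph0 →
                  Cardinal.mk Z ≠ Cardinal.aleph0 → Cardinal.mk Z = Cardinal.aleph 1 := by
                intro Z hz1 hz2
                have hle : Cardinal.mk Z ≤ Cardinal.aleph 1 := hM ▸ Cardinal.mk_set_le Z
                rcases lt_or_eq_of_le hle with hlt | heq
                · rw [← Cardinal.succ_aleph0, Order.lt_succ_iff] at hlt
                  exact absurd (lt_or_eq_of_le hlt) (by tauto)
                · exact heq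
              rw [key A h1 h3, key B h2 h4]
      have : Countable (Quotient (Setoid.mk E28 hE)) := hinj.countable
      exact Cardinal.mk_le_aleph0
    -- now finish: X and Y are small, hence neither is the universe
    have hXlt : Cardinal.mk X < Cardinal.aleph 1 :=
      lt_of_le_of_lt (hsmall.trans hquot) Cardinal.aleph0_lt_aleph_one
    have hXne : X ≠ Set.univ := by
      intro h
      rw [h, Cardinal.mk_univ, hM] at hXlt
      exact lt_irrefl _ hXlt
    have hYne : Y ≠ Set.univ := by
      intro h
      have hY : Cardinal.mk Y < Cardinal.aleph 1 := hXY ▸ hXlt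
      rw [h, Cardinal.mk_univ, hM] at hY
      exact lt_irrefl _ hY
    exact ⟨hXY, by simp [hXne, hYne]⟩
  · -- not cardinality coarsening
    have hInf : Infinite M := by
      rw [Cardinal.infinite_iff, hM]
      exact Cardinal.aleph0_lt_aleph_one.le
    obtain ⟨x⟩ := (inferInstance : Nonempty M)
    refine ⟨Set.univ, {x}ᶜ, ?_, ?_⟩
    · rw [Cardinal.mk_univ, Cardinal.mk_compl_of_infinite]
      rw [Cardinal.mk_singleton, hM]
      exact lt_of_lt_of_le Cardinal.one_lt_aleph0 Cardinal.aleph0_lt_aleph_one.le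
    · intro h
      have : ({x}ᶜ : Set M) = Set.univ := h.2.mp rfl
      have hx : x ∈ ({x}ᶜ : Set M) := this ▸ Set.mem_univ x
      exact hx rfl
end

section
/- Let M be a type and E an equivalence relation on Set M that is cardinality coarsening on small concepts. Then for every ∂ : Set M → M realizing A[E], E is cardinality coarsening on abstracts: for all X, Y : Set M with Cardinal.mk X = Cardinal.mk Y and X ⊆ Set.range ∂, E(X, Y) holds. (The key point is that Cardinal.mk (Set.range ∂) ≤ Cardinal.mk (Quotient sE).) -/
universe u

/-- If `E` is cardinality coarsening on small concepts, then any realization of `A[E]` is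
cardinality coarsening on abstracts. -/
theorem ccSmall_implies_ccAbstracts {M : Type u} (E : Set M → Set M → Prop)
    (hE : Equivalence E)
    (hsmall : ∀ X Y : Set M, Cardinal.mk X = Cardinal.mk Y →
      Cardinal.mk X ≤ Cardinal.mk (Quotient (Setoid.mk E hE)) → E X Y)
    (d : Set M → M) (hd : ∀ X Y : Set M, d X = d Y ↔ E X Y)
    (X Y : Set M) (hXY : Cardinal.mk X = Cardinal.mk Y) (hX : X ⊆ Set.range d) :
    E X Y := by
  refine hsmall X Y hXY ?_
  set s : Setoid (Set M) := Setoid.mk E hE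
  let f : Quotient s → M := Quotient.lift d (fun a b h => (hd a b).mpr h)
  have hrange : Set.range d = Set.range f := by
    ext m
    constructor
    · rintro ⟨A, rfl⟩; exact ⟨Quotient.mk s A, rfl⟩
    · rintro ⟨q, rfl⟩
      obtain ⟨A, rfl⟩ := Quotient.exists_rep q
      exact ⟨A, rfl⟩
  calc Cardinal.mk X ≤ Cardinal.mk (Set.range d) := Cardinal.mk_le_mk_of_subset hX
    _ = Cardinal.mk (Set.range f) := by rw [hrange]
    _ ≤ Cardinal.mk (Quotient s) := Cardinal.mk_range_le
end

section
/- Let M be an infinite type and let sE₀ be the setoid on Set M given by the bicardinality relation E₀(X,Y) := Cardinal.mk X = Cardinal.mk Y ∧ Cardinal.mk ↥(Xᶜ) = Cardinal.mk ↥(Yᶜ). Then Cardinal.mk (Quotient sE₀) ≤ Cardinal.mk M. -/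
universe u

open Cardinal

lemma mk_Iic_cardinal {κ : Cardinal.{u}} (hκ : ℵ₀ ≤ κ) :
    Cardinal.mk {c : Cardinal.{u} // c ≤ κ} ≤ Cardinal.lift.{u+1} κ := by
  have hinj : Function.Injective
      (fun c : {c : Cardinal.{u} // c ≤ κ} => (⟨c.1.ord, Cardinal.ord_le_ord.2 c.2⟩ :
        {o : Ordinal.{u} // o ≤ κ.ord})) := by
    intro a b h
    simp only [Subtype.mk.injEq] at h
    exact Subtype.ext (Cardinal.ord_injective h)
  calc Cardinal.mk {c : Cardinal.{u} // c ≤ κ}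
      ≤ Cardinal.mk {o : Ordinal.{u} // o ≤ κ.ord} := Cardinal.mk_le_of_injective hinj
    _ = Cardinal.mk (Set.Iio (Order.succ κ.ord)) := by rw [Order.Iio_succ]; rfl
    _ = Cardinal.lift.{u+1} (Order.succ κ.ord).card := Ordinal.mk_Iio_ordinal _
    _ = Cardinal.lift.{u+1} κ := by
        rw [Ordinal.card_succ, Cardinal.card_ord, Cardinal.add_one_eq hκ]

/-- The setoid on `Set M` given by the bicardinality relation: equinumerous with
equinumerous complements. -/
def bicardSetoid (M : Type u) : Setoid (Set M) :=
  ⟨fun X Y => Cardinal.mk X = Cardinal.mk Y ∧ Cardinal.mk ↥(Xᶜ) = Cardinal.mk ↥(Yᶜ),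
    ⟨fun _ => ⟨rfl, rfl⟩, fun h => ⟨h.1.symm, h.2.symm⟩,
      fun h h' => ⟨h.1.trans h'.1, h.2.trans h'.2⟩⟩⟩

/-- On an infinite domain, the number of bicardinality classes is at most `|M|`. -/
theorem bicard_quotient_le {M : Type u} [Infinite M] :
    Cardinal.mk (Quotient (bicardSetoid M)) ≤ Cardinal.mk M := by
  set κ := Cardinal.mk M with hκdef
  have hκ : ℵ₀ ≤ κ := Cardinal.infinite_iff.1 ‹Infinite M›
  set S := {c : Cardinal.{u} // c ≤ κ}
  let f : Quotient (bicardSetoid M) → S × S :=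
    Quotient.lift (fun X : Set M => (⟨Cardinal.mk X, Cardinal.mk_set_le X⟩,
      ⟨Cardinal.mk ↥(Xᶜ), Cardinal.mk_set_le Xᶜ⟩))
      (fun X Y h => by
        obtain ⟨h1, h2⟩ := h
        simp [h1, h2])
  have hf : Function.Injective f := by
    rintro ⟨X⟩ ⟨Y⟩ h
    exact Quotient.sound ⟨congrArg (fun p => p.1.1) h, congrArg (fun p => p.2.1) h⟩
  have h1 : Cardinal.lift.{u+1} (Cardinal.mk (Quotient (bicardSetoid M)))
      ≤ Cardinal.mk (S × S) := by
    have := Cardinal.lift_mk_le'.2 ⟨⟨f, hf⟩⟩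
    rwa [Cardinal.lift_id'.{u, u+1}] at this
  have h2 : Cardinal.mk (S × S) ≤ Cardinal.lift.{u+1} κ := by
    rw [Cardinal.mk_prod]; simp only [Cardinal.lift_id]
    calc Cardinal.mk S * Cardinal.mk S
        ≤ Cardinal.lift.{u+1} κ * Cardinal.lift.{u+1} κ :=
          mul_le_mul' (mk_Iic_cardinal hκ) (mk_Iic_cardinal hκ)
      _ = Cardinal.lift.{u+1} κ := Cardinal.mul_eq_self (by simpa using hκ)
  have := h1.trans h2
  exact Cardinal.lift_le.1 this
end
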